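/- arXiv:2404.02715 — 3 statements merged into one kernel-verified Lean document; each statement's English description precedes it below -/
import Mathlib

section
/- Assume the continuum hypothesis (2^{ℵ₀} = ℵ₁). Then for every cardinal κ > ℵ₁, the Stewart poset 𝕊_κ satisfies the ℵ₂-chain condition: every antichain in 𝕊_κ has cardinality at most ℵ₁. -/
noncomputable section

open Cardinal Set

/-- The first uncountable ordinal `ω₁`. -/
def omega1 : Ordinal := (Cardinal.aleph 1).ord

/-- A transfinite binary sequence: a function `t : α → 2` for some ordinal `α`. -/
abbrev BinSeq : Type 1 := Σ α : Ordinal, (Set.Iio α → Bool)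

namespace BinSeq

/-- The restriction `t ↾ β` of a binary sequence `t` to an initial segment of its domain. -/
def restrict (t : BinSeq) (β : Ordinal) (h : β ≤ t.1) : BinSeq :=
  ⟨β, fun x => t.2 ⟨x.1, lt_of_lt_of_le x.2 h⟩⟩

/-- `s.sub t`: `s` is an initial segment of `t` (that is, `s ⊆ t`). -/
def sub (s t : BinSeq) : Prop := ∃ h : s.1 ≤ t.1, t.restrict s.1 h = s

/-- `s.ssub t`: `s` is a proper initial segment of `t` (that is, `s ⊊ t`). -/
def ssub (s t : BinSeq) : Prop := ∃ h : s.1 < t.1, t.restrict s.1 h.le = s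

end BinSeq

/-- A candidate branch: a function `f : ω₁ → 2`. -/
abbrev BinBranch : Type 1 := Set.Iio omega1 → Bool

/-- The restriction `f ↾ α` of `f : ω₁ → 2` to an ordinal `α < ω₁`. -/
def BinBranch.restrict (f : BinBranch) (α : Ordinal) (h : α < omega1) : BinSeq :=
  ⟨α, fun x => f ⟨x.1, lt_trans x.2 h⟩⟩

/-- `C` is a closed unbounded (club) subset of `ω₁`: it is a set of countable ordinals,
unbounded in `ω₁`, and closed under suprema of bounded nonempty subsets. -/
def IsClubBelow (C : Set Ordinal) : Prop :=
  C ⊆ Set.Iio omega1 ∧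
  (∀ β < omega1, ∃ α ∈ C, β < α) ∧
  (∀ s : Set Ordinal, s ⊆ C → s.Nonempty → sSup s < omega1 → sSup s ∈ C)

/-- `S` is a stationary subset of `ω₁`: it meets every club subset of `ω₁`. -/
def IsStationaryBelow (S : Set Ordinal) : Prop :=
  ∀ C : Set Ordinal, IsClubBelow C → (S ∩ C).Nonempty

/-- `T` is a binary ℵ₁-tree: a downward closed family of binary sequences of
countable length, all of whose levels are countable. -/
structure IsBinaryAleph1Tree (T : Set BinSeq) : Prop where
  dom_lt : ∀ t ∈ T, t.1 < omega1
  downward_closed : ∀ t ∈ T, ∀ β, ∀ h : β ≤ t.1, t.restrict β h ∈ T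
  countable_levels : ∀ α < omega1, {t | t ∈ T ∧ t.1 = α}.Countable

/-- The set of cofinal branches of a binary tree:
functions `f : ω₁ → 2` all of whose initial segments lie in `T`. -/
def BinBranches (T : Set BinSeq) : Set BinBranch :=
  {f | ∀ α, ∀ h : α < omega1, f.restrict α h ∈ T}

/-- A binary Kurepa tree: a binary ℵ₁-tree with at least ℵ₂-many cofinal branches. -/
def IsBinaryKurepa (T : Set BinSeq) : Prop :=
  IsBinaryAleph1Tree T ∧ Cardinal.aleph 2 ≤ #(↥(BinBranches T))

/-- `◇(T)` for a binary tree `T`: there is a transversal `⟨t_α | α < ω₁⟩` with `t_α ∈ T_α`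
such that for every cofinal branch `f` of `T`, the set `{α < ω₁ | f ↾ α = t_α}` is stationary. -/
def BinDiamond (T : Set BinSeq) : Prop :=
  ∃ t : Ordinal → BinSeq,
    (∀ α < omega1, t α ∈ T ∧ (t α).1 = α) ∧
    ∀ f ∈ BinBranches T,
      IsStationaryBelow {α | ∃ h : α < omega1, BinBranch.restrict f α h = t α}

/-- An abstract tree: a strict partial order in which the set of predecessors
of every point is well-ordered. -/
structure OTree where
  carrier : Type
  lt : carrier → carrier → Prop
  lt_trans : ∀ {x y z}, lt x y → lt y z → lt x z
  lt_irrefl : ∀ x, ¬ lt x x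
  pred_wellOrder : ∀ x, IsWellOrder {y // lt y x} fun a b => lt a.1 b.1

namespace OTree

/-- The height of a node: the order type of its set of predecessors. -/
def height (t : OTree) (x : t.carrier) : Ordinal :=
  @Ordinal.type {y // t.lt y x} (fun a b => t.lt a.1 b.1) (t.pred_wellOrder x)

/-- The `α`-th level of the tree. -/
def level (t : OTree) (α : Ordinal) : Set t.carrier := {x | t.height x = α}

/-- An ℵ₁-tree: a tree of height `ω₁` all of whose levels are countable. -/
def IsAleph1Tree (t : OTree) : Prop :=
  (∀ x, t.height x < omega1) ∧
  (∀ α < omega1, (t.level α).Nonempty) ∧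
  (∀ α < omega1, (t.level α).Countable)

/-- A tree is Hausdorff if nodes of the same limit height
with the same predecessors are equal. -/
def Hausdorff (t : OTree) : Prop :=
  ∀ x y : t.carrier, Order.IsSuccLimit (t.height x) → t.height x = t.height y →
    {z | t.lt z x} = {z | t.lt z y} → x = y

/-- The set of cofinal branches: uncountable maximal chains. -/
def branches (t : OTree) : Set (Set t.carrier) :=
  {C | IsMaxChain t.lt C ∧ ¬ C.Countable}

/-- A Kurepa tree: an ℵ₁-tree with at least ℵ₂-many cofinal branches. -/
def IsKurepa (t : OTree) : Prop :=
  t.IsAleph1Tree ∧ Cardinal.aleph 2 ≤ #(↥t.branches)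

/-- `◇(𝐓)`: there is a transversal `⟨b_α | α < ω₁⟩` with `b_α ∈ T_α` such that for every
cofinal branch `f`, the set `{α < ω₁ | f ↾ α = b_α}` (i.e. the set of `α < ω₁` such that
`b_α` is the unique element of `f` on the `α`-th level) is stationary. -/
def Diamond (t : OTree) : Prop :=
  ∃ b : Ordinal → t.carrier,
    (∀ α < omega1, b α ∈ t.level α) ∧
    ∀ f ∈ t.branches,
      IsStationaryBelow {α | α < omega1 ∧ f ∩ t.level α = {b α}}

/-- A tree has height `ω₁` if every node has countable height
and every countable level is nonempty. -/
def HasHeightOmega1 (t : OTree) : Prop :=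
  (∀ x, t.height x < omega1) ∧ ∀ α < omega1, (t.level α).Nonempty

end OTree

/-- A condition in the Stewart poset `𝕊_κ` (with `κ` realized as a type `K`): a triple
`(T, ε, b)` where `ε` is a countable limit ordinal, `T` is a countable downward-closed
family of binary sequences of length `≤ ε` forming a normal tree of height `ε + 1`, and
`b` is an injection from a countable subset of `K` into the top level of `T`. -/
structure Stewart (K : Type 1) where
  eps : Ordinal
  eps_lt : eps < omega1
  eps_isLimit : Order.IsSuccLimit eps
  T : Set BinSeq
  T_countable : T.Countable
  dom_le : ∀ t ∈ T, t.1 ≤ eps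
  downward_closed : ∀ t ∈ T, ∀ β, ∀ h : β ≤ t.1, t.restrict β h ∈ T
  normal : ∀ t ∈ T, ∀ β, t.1 ≤ β → β ≤ eps → ∃ t' ∈ T, t'.1 = β ∧ t.sub t'
  top_nonempty : ∃ t ∈ T, t.1 = eps
  bdom : Set K
  bdom_countable : bdom.Countable
  b : bdom → BinSeq
  b_inj : Function.Injective b
  b_mem_top : ∀ ξ : bdom, b ξ ∈ T ∧ (b ξ).1 = eps

/-- The ordering of the Stewart poset: `q ≤ p` iff `ε_q ≥ ε_p`, `T_q` end-extends `T_p`,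
`dom(b_q) ⊇ dom(b_p)`, and `b_q(ξ) ⊇ b_p(ξ)` for every `ξ ∈ dom(b_p)`. -/
def Stewart.le {K : Type 1} (q p : Stewart K) : Prop :=
  p.eps ≤ q.eps ∧
  p.T ⊆ q.T ∧
  (∀ t ∈ q.T, t.1 ≤ p.eps → t ∈ p.T) ∧
  p.bdom ⊆ q.bdom ∧
  ∀ ξ : p.bdom, ∀ h : ξ.1 ∈ q.bdom, (p.b ξ).sub (q.b ⟨ξ.1, h⟩)


/-! ### Auxiliary development for Statement 14 -/

namespace StewartACC

open Ordinal

lemma omega1_def : omega1.{u} = (Cardinal.aleph 1).ord := rfl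

lemma omega1_isLimit : Order.IsSuccLimit omega1.{u} := Cardinal.isSuccLimit_ord (Cardinal.aleph0_le_aleph 1)

lemma card_le_of_lt_omega1 {o : Ordinal.{u}} (h : o < omega1) : o.card ≤ ℵ₀ := by
  rw [omega1_def, Cardinal.lt_ord] at h
  exact Order.lt_succ_iff.mp (Cardinal.succ_aleph0 ▸ h)

lemma lt_omega1_of_card {o : Ordinal.{u}} (h : o.card ≤ ℵ₀) : o < omega1 := by
  rw [omega1_def, Cardinal.lt_ord]
  exact h.trans_lt Cardinal.aleph0_lt_aleph_one

lemma add_omega0_lt_omega1 {o : Ordinal.{u}} (h : o < omega1) : o + omega0 < omega1 := by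
  apply lt_omega1_of_card
  rw [Ordinal.card_add, Ordinal.card_omega0]
  exact le_trans (add_le_add_left (card_le_of_lt_omega1 h) _) Cardinal.aleph0_add_aleph0.le

lemma succ_lt_omega1 {o : Ordinal.{u}} (h : o < omega1) : o + 1 < omega1 := by
  rw [Ordinal.add_one_eq_succ]
  exact omega1_isLimit.succ_lt h

lemma countable_Iio_of_lt_omega1 {o : Ordinal.{0}} (h : o < omega1) :
    (Set.Iio o).Countable := by
  rw [← Set.countable_coe_iff, ← Cardinal.mk_le_aleph0_iff]
  rw [Ordinal.mk_Iio_ordinal]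
  calc Cardinal.lift.{1} o.card ≤ Cardinal.lift.{1} ℵ₀ :=
        Cardinal.lift_le.2 (card_le_of_lt_omega1 h)
    _ = ℵ₀ := Cardinal.lift_aleph0

/-- The tail function: extend `t` beyond its domain by the indicator of position `t.1 + n`. -/
def gfun (t : BinSeq) (n : ℕ) (i : Ordinal.{0}) : Bool :=
  if h : i < t.1 then t.2 ⟨i, h⟩ else if i = t.1 + (n : Ordinal) then true else false

/-- The extension of `t` of length `β` whose tail is the indicator of position `t.1 + n`. -/
def node (t : BinSeq) (n : ℕ) (β : Ordinal.{0}) : BinSeq := ⟨β, fun i => gfun t n i.1⟩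

@[simp] lemma node_fst (t : BinSeq) (n : ℕ) (β : Ordinal.{0}) : (node t n β).1 = β := rfl

lemma node_restrict (t : BinSeq) (n : ℕ) {β γ : Ordinal.{0}} (h : γ ≤ β) :
    (node t n β).restrict γ h = node t n γ := rfl

lemma restrict_eta (t : BinSeq) : t.restrict t.1 le_rfl = t := rfl

lemma node_eq_restrict (t : BinSeq) (n : ℕ) {γ : Ordinal.{0}} (h : γ ≤ t.1) :
    node t n γ = t.restrict γ h := by
  refine congrArg (Sigma.mk γ) (funext fun x => ?_)
  have hx : x.1 < t.1 := lt_of_lt_of_le x.2 h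
  simp only [gfun, dif_pos hx]


/-- The key amalgamation lemma: two conditions with the same `ε`, the same tree, and
agreeing injections on the common domain are compatible. -/
lemma merge {K : Type 1} (p q : Stewart K) (hε : q.eps = p.eps) (hT : q.T = p.T)
    (hb : ∀ x (h1 : x ∈ p.bdom) (h2 : x ∈ q.bdom), p.b ⟨x, h1⟩ = q.b ⟨x, h2⟩) :
    ∃ r : Stewart K, r.le p ∧ r.le q := by
  classical
  have hcnt : Countable ↥(p.bdom ∪ q.bdom) :=
    (p.bdom_countable.union q.bdom_countable).to_subtype
  obtain ⟨e, he⟩ := exists_injective_nat ↥(p.bdom ∪ q.bdom)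
  set ε := p.eps with hεdef
  -- the merged injection on the old tree
  set B : ↥(p.bdom ∪ q.bdom) → BinSeq := fun ξ =>
    if h : ξ.1 ∈ p.bdom then p.b ⟨ξ.1, h⟩ else q.b ⟨ξ.1, Or.resolve_left ξ.2 h⟩ with hBdef
  have hB : ∀ ξ, B ξ ∈ p.T ∧ (B ξ).1 = ε := by
    intro ξ
    by_cases h : ξ.1 ∈ p.bdom
    · rw [hBdef]; simp only [dif_pos h]; exact p.b_mem_top _
    · rw [hBdef]; simp only [dif_neg h]
      exact ⟨hT ▸ (q.b_mem_top _).1, hε ▸ (q.b_mem_top _).2⟩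
  -- the new part of the tree
  set newT : Set BinSeq := {x | ∃ t, (t ∈ p.T ∧ t.1 = ε) ∧ ∃ n : ℕ, ∃ β,
    (ε < β ∧ β ≤ ε + omega0) ∧ x = node t n β} with hnewTdef
  have hnewT_mem : ∀ {t n β}, t ∈ p.T → t.1 = ε → ε < β → β ≤ ε + omega0 →
      node t n β ∈ newT := by
    intro t n β h1 h2 h3 h4; exact ⟨t, ⟨h1, h2⟩, n, β, ⟨h3, h4⟩, rfl⟩
  have hεω : ε < ε + omega0 := by
    simpa using (add_lt_add_left omega0_pos ε : ε + 0 < ε + omega0)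
  refine ⟨⟨ε + omega0, ?_, ?_, p.T ∪ newT, ?_, ?_, ?_, ?_, ?_, p.bdom ∪ q.bdom, ?_,
    fun ξ => node (B ξ) (e ξ) (ε + omega0), ?_, ?_⟩, ?_, ?_⟩
  · exact add_omega0_lt_omega1 p.eps_lt
  · exact Ordinal.isSuccLimit_add _ isSuccLimit_omega0
  · -- countability of the tree
    refine p.T_countable.union (Set.Countable.mono ?_ (Set.Countable.image
      (s := p.T ×ˢ (Set.univ : Set ℕ) ×ˢ (Set.Iio (ε + omega0 + 1)))
      (f := fun z : BinSeq × ℕ × Ordinal.{0} => node z.1 z.2.1 z.2.2) ?_))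
    · rintro x ⟨t, ⟨ht, -⟩, n, β, ⟨-, hβ2⟩, rfl⟩
      exact ⟨(t, n, β), ⟨ht, trivial, lt_of_le_of_lt hβ2 (lt_add_one _)⟩, rfl⟩
    · exact p.T_countable.prod ((Set.countable_univ).prod
        (countable_Iio_of_lt_omega1 (succ_lt_omega1 (add_omega0_lt_omega1 p.eps_lt))))
  · -- dom_le
    rintro t (ht | ⟨t', -, n, β, ⟨-, hβ2⟩, rfl⟩)
    · exact (p.dom_le t ht).trans (le_self_add)
    · exact hβ2
  · -- downward_closed
    rintro x (hx | ⟨t, ⟨ht, htop⟩, n, β, ⟨hβ1, hβ2⟩, rfl⟩) γ hγ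
    · exact Or.inl (p.downward_closed x hx γ hγ)
    · show node t n γ ∈ p.T ∪ newT
      by_cases hc : γ ≤ ε
      · left
        have hγt : γ ≤ t.1 := htop ▸ hc
        rw [node_eq_restrict t n hγt]
        exact p.downward_closed t ht γ hγt
      · exact Or.inr (hnewT_mem ht htop (lt_of_not_ge hc) (le_trans hγ hβ2))
  · -- normal
    rintro x (hx | ⟨t, ⟨ht, htop⟩, n, β₀, ⟨hβ1, hβ2⟩, rfl⟩) β hx1 hβ
    · by_cases hc : β ≤ ε
      · obtain ⟨t', ht', h1, h2⟩ := p.normal x hx β hx1 hc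
        exact ⟨t', Or.inl ht', h1, h2⟩
      · obtain ⟨t, ht, htop, hle, hres⟩ := p.normal x hx ε (p.dom_le x hx) le_rfl
        refine ⟨node t 0 β, Or.inr (hnewT_mem ht htop (lt_of_not_ge hc) hβ), rfl,
          hx1, ?_⟩
        exact (node_eq_restrict t 0 hle).trans hres
    · refine ⟨node t n β, Or.inr (hnewT_mem ht htop (lt_of_lt_of_le hβ1 hx1) hβ), rfl,
        hx1, rfl⟩
  · -- top_nonempty
    obtain ⟨t, ht, htop⟩ := p.top_nonempty
    exact ⟨node t 0 (ε + omega0), Or.inr (hnewT_mem ht htop hεω le_rfl), rfl⟩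
  · exact p.bdom_countable.union q.bdom_countable
  · -- b_inj
    intro ξ η hnode
    have h2 : (fun (i : Set.Iio (ε + omega0)) => gfun (B ξ) (e ξ) i.1)
        = fun (i : Set.Iio (ε + omega0)) => gfun (B η) (e η) i.1 := by
      injection hnode with h1 h2
    have hlt : ε + (e ξ : Ordinal) < ε + omega0 := add_lt_add_right (nat_lt_omega0 _) ε
    have hthis := congrFun h2 ⟨ε + (e ξ : Ordinal), hlt⟩
    have hnotlt : ¬ (ε + (e ξ : Ordinal) < ε) := not_lt.2 (le_self_add)
    simp only [gfun, (hB ξ).2, (hB η).2, dif_neg hnotlt, if_pos rfl] at hthis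
    by_cases hee : ε + (e ξ : Ordinal) = ε + (e η : Ordinal)
    · apply he
      have := (add_right_inj ε).1 hee
      exact_mod_cast this
    · rw [if_neg hee] at hthis
      exact absurd hthis (by simp)
  · -- b_mem_top
    intro ξ
    exact ⟨Or.inr (hnewT_mem (hB ξ).1 (hB ξ).2 hεω le_rfl), rfl⟩
  · -- r ≤ p
    refine ⟨le_self_add, Set.subset_union_left, ?_, Set.subset_union_left, ?_⟩
    · rintro t (ht | ⟨t', -, n, β, ⟨hβ1, -⟩, rfl⟩) hle
      · exact ht
      · exact absurd hle (not_le.2 hβ1)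
    · intro ξ h
      have hBξ : B ⟨ξ.1, h⟩ = p.b ξ := by rw [hBdef]; exact dif_pos ξ.2
      have h1 : (p.b ξ).1 ≤ (B ⟨ξ.1, h⟩).1 := by rw [hBξ]
      have h0 : (p.b ξ).1 ≤ ε + omega0 := by
        rw [(p.b_mem_top ξ).2]; exact le_self_add
      refine ⟨h0, ?_⟩
      have key : ∀ (s : BinSeq), s = p.b ξ → node s (e ⟨ξ.1, h⟩) ((p.b ξ).1) = p.b ξ := by
        rintro s rfl
        exact (node_eq_restrict _ _ le_rfl).trans (restrict_eta _)
      exact key _ hBξ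
  · -- r ≤ q
    refine ⟨?_, ?_, ?_, Set.subset_union_right, ?_⟩
    · show q.eps ≤ ε + omega0
      rw [hε]; exact le_self_add
    · show q.T ⊆ p.T ∪ newT
      rw [hT]; exact Set.subset_union_left
    · rintro t (ht | ⟨t', -, n, β, ⟨hβ1, -⟩, rfl⟩) hle
      · rw [hT]; exact ht
      · rw [hε] at hle; exact absurd hle (not_le.2 hβ1)
    · intro ξ h
      have hBξ : B ⟨ξ.1, h⟩ = q.b ξ := by
        rw [hBdef]
        by_cases hp' : ξ.1 ∈ p.bdom
        · simp only [dif_pos hp']; exact hb ξ.1 hp' ξ.2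
        · simp only [dif_neg hp']
      have h0 : (q.b ξ).1 ≤ ε + omega0 := by
        rw [(q.b_mem_top ξ).2, hε]; exact le_self_add
      refine ⟨h0, ?_⟩
      have key : ∀ (s : BinSeq), s = q.b ξ → node s (e ⟨ξ.1, h⟩) ((q.b ξ).1) = q.b ξ := by
        rintro s rfl
        exact (node_eq_restrict _ _ le_rfl).trans (restrict_eta _)
      exact key _ hBξ


/-- Extensionality for Stewart conditions. -/
lemma Stewart.ext' {K : Type 1} {p q : Stewart K} (h1 : p.eps = q.eps) (h2 : p.T = q.T)
    (h3 : p.bdom = q.bdom)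
    (h4 : ∀ x (hp : x ∈ p.bdom) (hq : x ∈ q.bdom), p.b ⟨x, hp⟩ = q.b ⟨x, hq⟩) : p = q := by
  obtain ⟨e₁, a₁, b₁, T₁, c₁, d₁, f₁, g₁, t₁, dom₁, cc₁, bb₁, i₁, m₁⟩ := p
  obtain ⟨e₂, a₂, b₂, T₂, c₂, d₂, f₂, g₂, t₂, dom₂, cc₂, bb₂, i₂, m₂⟩ := q
  simp only at h1 h2 h3 h4
  subst h1; subst h2; subst h3
  have : bb₁ = bb₂ := funext fun ξ => h4 ξ.1 ξ.2 ξ.2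
  subst this
  rfl

lemma aleph1_power_aleph0 (hCH : (2 : Cardinal.{1}) ^ Cardinal.aleph 0 = Cardinal.aleph 1) :
    (Cardinal.aleph 1 : Cardinal.{1}) ^ (ℵ₀ : Cardinal.{1}) = Cardinal.aleph 1 := by
  have hCH' : (2 : Cardinal.{1}) ^ (ℵ₀ : Cardinal.{1}) = Cardinal.aleph 1 := by
    rw [← Cardinal.aleph_zero]; exact hCH
  rw [← hCH', ← Cardinal.power_mul, Cardinal.aleph0_mul_aleph0]

/-- Under CH, a set of size at most `ℵ₁` has at most `ℵ₁`-many countable subsets. -/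
lemma mk_countable_subsets (hCH : (2 : Cardinal.{1}) ^ Cardinal.aleph 0 = Cardinal.aleph 1)
    {Y : Type 1} {X : Set Y} (hX : #(↥X) ≤ Cardinal.aleph 1) :
    #(↥{s : Set Y | s.Countable ∧ s ⊆ X}) ≤ Cardinal.aleph 1 := by
  classical
  have hsurj : Function.Surjective
      (fun (f : ULift.{1} ℕ → Option ↥X) =>
        (⟨⋃ n : ULift.{1} ℕ, Option.elim (f n) ∅ (fun x => {x.1}), by
          refine ⟨Set.countable_iUnion fun n => ?_, Set.iUnion_subset fun n => ?_⟩
          · cases f n with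
            | none => exact Set.countable_empty
            | some x => exact Set.countable_singleton _
          · cases f n with
            | none => exact Set.empty_subset _
            | some x => exact Set.singleton_subset_iff.2 x.2⟩ :
          ↥{s : Set Y | s.Countable ∧ s ⊆ X})) := by
    rintro ⟨s, hs, hsub⟩
    rcases Set.eq_empty_or_nonempty s with rfl | hne
    · refine ⟨fun _ => none, Subtype.ext ?_⟩
      simp
    · obtain ⟨g, hg⟩ := Set.Countable.exists_eq_range hs hne
      refine ⟨fun n => some ⟨g n.down, hsub (by rw [hg]; exact Set.mem_range_self _)⟩,
        Subtype.ext ?_⟩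
      have key : (⋃ n : ULift.{1} ℕ, ({g n.down} : Set Y)) = s := by
        rw [hg]; ext y
        simp only [Set.mem_iUnion, Set.mem_singleton_iff, Set.mem_range]
        exact ⟨fun ⟨n, h⟩ => ⟨n.down, h.symm⟩, fun ⟨n, h⟩ => ⟨ULift.up n, h.symm⟩⟩
      exact key
  refine le_trans (Cardinal.mk_le_of_surjective hsurj) ?_
  rw [← Cardinal.power_def]
  calc #(Option ↥X) ^ #(ULift.{1} ℕ)
      = #(Option ↥X) ^ (ℵ₀ : Cardinal.{1}) := by
        rw [Cardinal.mk_uLift, Cardinal.mk_nat, Cardinal.lift_aleph0]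
    _ ≤ (Cardinal.aleph 1) ^ (ℵ₀ : Cardinal.{1}) := by
        apply Cardinal.power_le_power_right
        rw [Cardinal.mk_option]
        exact le_trans (add_le_add_left hX 1)
          (Cardinal.add_one_eq (Cardinal.aleph0_le_aleph 1)).le
    _ = Cardinal.aleph 1 := aleph1_power_aleph0 hCH

/-- The set of binary sequences of countable length. -/
def Sset : Set BinSeq := {s | s.1 < omega1}

lemma mk_Sset (hCH : (2 : Cardinal.{1}) ^ Cardinal.aleph 0 = Cardinal.aleph 1) :
    #(↥Sset) ≤ Cardinal.aleph 1 := by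
  have hsurj : Function.Surjective
      (fun (z : Σ α : ↥(Set.Iio omega1.{0}), (↥(Set.Iio α.1) → Bool)) =>
        (⟨⟨z.1.1, z.2⟩, z.1.2⟩ : ↥Sset)) := by
    rintro ⟨⟨α, f⟩, h⟩
    exact ⟨⟨⟨α, h⟩, f⟩, rfl⟩
  refine le_trans (Cardinal.mk_le_of_surjective hsurj) ?_
  rw [Cardinal.mk_sigma]
  have hbound : ∀ α : ↥(Set.Iio omega1.{0}), #(↥(Set.Iio α.1) → Bool) ≤ Cardinal.aleph 1 := by
    intro α
    rw [Cardinal.mk_arrow]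
    calc Cardinal.lift.{1,0} #Bool ^ Cardinal.lift.{0,1} #(↥(Set.Iio α.1))
        = 2 ^ (#(↥(Set.Iio α.1)) : Cardinal.{1}) := by
          rw [Cardinal.mk_bool, Cardinal.lift_two, Cardinal.lift_id']
      _ ≤ 2 ^ (ℵ₀ : Cardinal.{1}) := by
          apply Cardinal.power_le_power_left two_ne_zero
          rw [Ordinal.mk_Iio_ordinal]
          calc Cardinal.lift.{1} (α.1).card ≤ Cardinal.lift.{1} ℵ₀ :=
                Cardinal.lift_le.2 (card_le_of_lt_omega1 α.2)
            _ = ℵ₀ := Cardinal.lift_aleph0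
      _ = Cardinal.aleph 1 := by rw [← Cardinal.aleph_zero]; exact hCH
  calc (Cardinal.sum fun α : ↥(Set.Iio omega1.{0}) => #(↥(Set.Iio α.1) → Bool))
      ≤ Cardinal.sum fun _ : ↥(Set.Iio omega1.{0}) => Cardinal.aleph 1 :=
        Cardinal.sum_le_sum _ _ hbound
    _ = #(↥(Set.Iio omega1.{0})) * Cardinal.aleph 1 := Cardinal.sum_const' _ _
    _ = Cardinal.aleph 1 * Cardinal.aleph 1 := by
        rw [Ordinal.mk_Iio_ordinal, omega1_def, Cardinal.card_ord, Cardinal.lift_aleph,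
          Ordinal.lift_one]
    _ = Cardinal.aleph 1 := Cardinal.mul_eq_self (Cardinal.aleph0_le_aleph 1)



variable {K : Type 1}

/-- The "trace" of a condition over a set `E ⊆ K`: its `ε`, its tree, and the graph of
its injection restricted to `E`. -/
def trace (p : Stewart K) (E : Set K) : Ordinal.{0} × Set BinSeq × Set (K × BinSeq) :=
  (p.eps, p.T, {z : K × BinSeq | z.1 ∈ E ∧ ∃ h : z.1 ∈ p.bdom, p.b ⟨z.1, h⟩ = z.2})

/-- The set of potential traces over `E`. -/
def GT (E : Set K) : Set (Ordinal.{0} × Set BinSeq × Set (K × BinSeq)) :=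
  {τ | τ.1 < omega1 ∧ (τ.2.1.Countable ∧ τ.2.1 ⊆ Sset) ∧
    (τ.2.2.Countable ∧ τ.2.2 ⊆ E ×ˢ Sset)}

lemma trace_mem_GT (p : Stewart K) (E : Set K) : trace p E ∈ GT E := by
  refine ⟨p.eps_lt, ⟨p.T_countable, fun t ht => lt_of_le_of_lt (p.dom_le t ht) p.eps_lt⟩,
    ?_, ?_⟩
  · have hc : Countable ↥p.bdom := p.bdom_countable.to_subtype
    apply Set.Countable.mono ?_ (Set.countable_range fun x : ↥p.bdom => (x.1, p.b x))
    rintro ⟨x, s⟩ ⟨-, h, hs⟩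
    exact ⟨⟨x, h⟩, by simp [hs]⟩
  · rintro ⟨x, s⟩ ⟨hx, h, hs⟩
    refine ⟨hx, ?_⟩
    show s.1 < omega1
    have hs' : p.b ⟨x, h⟩ = s := hs
    rw [← hs', (p.b_mem_top ⟨x, h⟩).2]
    exact p.eps_lt

lemma mk_GT (hCH : (2 : Cardinal.{1}) ^ Cardinal.aleph 0 = Cardinal.aleph 1)
    {E : Set K} (hE : #(↥E) ≤ Cardinal.aleph 1) : #(↥(GT E)) ≤ Cardinal.aleph 1 := by
  have hES : #(↥(E ×ˢ Sset)) ≤ Cardinal.aleph 1 := by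
    rw [Cardinal.mk_congr (Equiv.Set.prod E Sset), Cardinal.mk_prod, Cardinal.lift_id,
      Cardinal.lift_id]
    exact le_trans (mul_le_mul' hE (mk_Sset hCH))
      (Cardinal.mul_eq_self (Cardinal.aleph0_le_aleph 1)).le
  have hinj : Function.Injective (fun τ : ↥(GT E) =>
      ((⟨τ.1.1, τ.2.1⟩ : ↥(Set.Iio omega1.{0})),
       (⟨τ.1.2.1, τ.2.2.1⟩ : ↥{s : Set BinSeq | s.Countable ∧ s ⊆ Sset}),
       (⟨τ.1.2.2, τ.2.2.2⟩ : ↥{s : Set (K × BinSeq) | s.Countable ∧ s ⊆ E ×ˢ Sset}))) := by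
    rintro ⟨⟨a1, a2, a3⟩, ha⟩ ⟨⟨b1, b2, b3⟩, hb⟩ h
    simp only [Prod.mk.injEq, Subtype.mk.injEq] at h
    simp only [Subtype.mk.injEq, Prod.mk.injEq]
    exact ⟨congrArg Subtype.val h.1, h.2.1, h.2.2⟩
  refine le_trans (Cardinal.mk_le_of_injective hinj) ?_
  rw [Cardinal.mk_prod, Cardinal.mk_prod, Cardinal.lift_id, Cardinal.lift_id,
    Cardinal.lift_id, Cardinal.lift_id]
  have h1 : #(↥(Set.Iio omega1.{0})) = Cardinal.aleph 1 := by
    rw [Ordinal.mk_Iio_ordinal, omega1_def, Cardinal.card_ord, Cardinal.lift_aleph,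
      Ordinal.lift_one]
  have h2 : #(↥{s : Set BinSeq | s.Countable ∧ s ⊆ Sset}) ≤ Cardinal.aleph 1 :=
    mk_countable_subsets hCH (mk_Sset hCH)
  have h3 : #(↥{s : Set (K × BinSeq) | s.Countable ∧ s ⊆ E ×ˢ Sset}) ≤ Cardinal.aleph 1 :=
    mk_countable_subsets hCH hES
  calc #(↥(Set.Iio omega1.{0})) * (#(↥{s : Set BinSeq | s.Countable ∧ s ⊆ Sset}) *
        #(↥{s : Set (K × BinSeq) | s.Countable ∧ s ⊆ E ×ˢ Sset}))
      ≤ Cardinal.aleph 1 * (Cardinal.aleph 1 * Cardinal.aleph 1) :=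
        mul_le_mul' h1.le (mul_le_mul' h2 h3)
    _ = Cardinal.aleph 1 := by
        rw [Cardinal.mul_eq_self (Cardinal.aleph0_le_aleph 1),
          Cardinal.mul_eq_self (Cardinal.aleph0_le_aleph 1)]



variable (A : Set (Stewart K))

open scoped Classical in
/-- A chosen witness-domain for a realized trace. -/
def wit (E : Set K) (τ : Ordinal.{0} × Set BinSeq × Set (K × BinSeq)) : Set K :=
  if h : ∃ p ∈ A, trace p E = τ then h.choose.bdom else ∅

lemma wit_countable (E : Set K) (τ) : (wit A E τ).Countable := by
  rw [wit]
  split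
  · next h => exact h.choose.bdom_countable
  · exact Set.countable_empty

lemma wit_spec {E : Set K} {τ} (h : ∃ p ∈ A, trace p E = τ) :
    ∃ q ∈ A, trace q E = τ ∧ q.bdom ⊆ wit A E τ := by
  rw [wit, dif_pos h]
  exact ⟨h.choose, h.choose_spec.1, h.choose_spec.2, subset_rfl⟩

/-- One closure step: add the witness-domains of all realized traces over `E`. -/
def step (E : Set K) : Set K :=
  E ∪ ⋃ τ ∈ (fun p => trace p E) '' A, wit A E τ

lemma subset_step (E : Set K) : E ⊆ step A E := Set.subset_union_left

/-- The transfinite iteration of `step`. -/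
def D : Ordinal.{0} → Set K :=
  Ordinal.lt_wf.fix (fun i rec => step A (⋃ j : ↥(Set.Iio i), rec j.1 j.2))

lemma D_eq (i : Ordinal.{0}) : D A i = step A (⋃ j : ↥(Set.Iio i), D A j.1) :=
  WellFounded.fix_eq Ordinal.lt_wf (fun i rec => step A (⋃ j : ↥(Set.Iio i), rec j.1 j.2)) i

lemma D_mono : ∀ {j i : Ordinal.{0}}, j ≤ i → D A j ⊆ D A i := by
  intro j i h
  rcases eq_or_lt_of_le h with rfl | hlt
  · exact subset_rfl
  · rw [D_eq A i]
    exact le_trans (Set.subset_iUnion (fun j' : ↥(Set.Iio i) => D A j'.1) ⟨j, hlt⟩)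
      (subset_step A _)

/-- The final closure set. -/
def Dfin : Set K := ⋃ j : ↥(Set.Iio omega1.{0}), D A j.1


lemma mk_iUnion_le' {Y : Type 1} {ι : Type 1} (f : ι → Set Y)
    (hι : #ι ≤ Cardinal.aleph 1) (hf : ∀ i, #(↥(f i)) ≤ Cardinal.aleph 1) :
    #(↥(⋃ i, f i)) ≤ Cardinal.aleph 1 :=
  calc #(↥(⋃ i, f i)) ≤ Cardinal.sum fun i => #(↥(f i)) := Cardinal.mk_iUnion_le_sum_mk
    _ ≤ Cardinal.sum fun _ : ι => Cardinal.aleph 1 := Cardinal.sum_le_sum _ _ hf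
    _ = #ι * Cardinal.aleph 1 := Cardinal.sum_const' _ _
    _ ≤ Cardinal.aleph 1 * Cardinal.aleph 1 := mul_le_mul' hι le_rfl
    _ = Cardinal.aleph 1 := Cardinal.mul_eq_self (Cardinal.aleph0_le_aleph 1)

lemma mk_Iio_le {i : Ordinal.{0}} (h : i ≤ omega1) : #(↥(Set.Iio i)) ≤ Cardinal.aleph 1 := by
  rw [Ordinal.mk_Iio_ordinal]
  calc Cardinal.lift.{1} i.card ≤ Cardinal.lift.{1} omega1.card :=
        Cardinal.lift_le.2 (Ordinal.card_le_card h)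
    _ = Cardinal.aleph 1 := by
        rw [omega1_def, Cardinal.card_ord, Cardinal.lift_aleph, Ordinal.lift_one]

lemma mk_step (hCH : (2 : Cardinal.{1}) ^ Cardinal.aleph 0 = Cardinal.aleph 1)
    {E : Set K} (hE : #(↥E) ≤ Cardinal.aleph 1) : #(↥(step A E)) ≤ Cardinal.aleph 1 := by
  rw [step]
  refine le_trans (Cardinal.mk_union_le _ _) ?_
  have h2 : #(↥(⋃ τ ∈ (fun p => trace p E) '' A, wit A E τ)) ≤ Cardinal.aleph 1 := by
    rw [Set.biUnion_eq_iUnion]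
    apply mk_iUnion_le'
    · refine le_trans (Cardinal.mk_le_mk_of_subset ?_) (mk_GT hCH hE)
      rintro τ ⟨p, hp, rfl⟩
      exact trace_mem_GT p E
    · intro τ
      exact le_trans (Cardinal.mk_le_aleph0_iff.2 (wit_countable A E τ.1).to_subtype)
        (Cardinal.aleph0_le_aleph 1)
  calc #(↥E) + #(↥(⋃ τ ∈ (fun p => trace p E) '' A, wit A E τ))
      ≤ Cardinal.aleph 1 + Cardinal.aleph 1 := add_le_add hE h2
    _ = Cardinal.aleph 1 := Cardinal.add_eq_self (Cardinal.aleph0_le_aleph 1)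

lemma mk_D (hCH : (2 : Cardinal.{1}) ^ Cardinal.aleph 0 = Cardinal.aleph 1) :
    ∀ i : Ordinal.{0}, i < omega1 → #(↥(D A i)) ≤ Cardinal.aleph 1 := by
  intro i
  induction i using Ordinal.induction with
  | _ i ih =>
    intro hi
    rw [D_eq]
    apply mk_step A hCH
    exact mk_iUnion_le' _ (mk_Iio_le hi.le) (fun j => ih j.1 j.2 (j.2.trans hi))

lemma mk_Dfin (hCH : (2 : Cardinal.{1}) ^ Cardinal.aleph 0 = Cardinal.aleph 1) :
    #(↥(Dfin A)) ≤ Cardinal.aleph 1 :=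
  mk_iUnion_le' _ (mk_Iio_le le_rfl) (fun j => mk_D A hCH j.1 j.2)

/-- The closure property: every condition in the antichain has its domain inside `Dfin A`. -/
lemma bdom_subset_Dfin
    (hA : ∀ p ∈ A, ∀ q ∈ A, p ≠ q → ¬ ∃ r : Stewart K, r.le p ∧ r.le q)
    {p : Stewart K} (hp : p ∈ A) : p.bdom ⊆ Dfin A := by
  classical
  have claim : ∃ i0, i0 < omega1.{0} ∧ p.bdom ∩ Dfin A ⊆ D A i0 := by
    rcases Set.eq_empty_or_nonempty (p.bdom ∩ Dfin A) with he | hne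
    · exact ⟨0, lt_omega1_of_card (by simp), by rw [he]; exact Set.empty_subset _⟩
    · obtain ⟨g, hg⟩ := (p.bdom_countable.mono Set.inter_subset_left).exists_eq_range hne
      have hmem : ∀ n : ℕ, g n ∈ Dfin A := fun n =>
        (show g n ∈ p.bdom ∩ Dfin A from hg ▸ Set.mem_range_self n).2
      have hDf : ∀ n : ℕ, ∃ j : ↥(Set.Iio omega1.{0}), g n ∈ D A j.1 := fun n =>
        Set.mem_iUnion.1 (hmem n)
      choose j hj using hDf
      have hsup : (⨆ n, (j n).1) < (Cardinal.aleph 1).ord :=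
        by
          have := Ordinal.iSup_lt_omega_one (f := fun n => (j n).1)
            (fun n => by rw [← Cardinal.ord_aleph]; exact (j n).2)
          rwa [← Cardinal.ord_aleph] at this
      refine ⟨⨆ n, (j n).1, hsup, ?_⟩
      intro x hx
      obtain ⟨n, rfl⟩ : x ∈ Set.range g := hg ▸ hx
      exact D_mono A (Ordinal.le_iSup (fun n => (j n).1) n) (hj n)
  obtain ⟨i0, hi0, hsub⟩ := claim
  have hUeq : (⋃ j : ↥(Set.Iio (i0 + 1)), D A j.1) = D A i0 := by
    apply Set.Subset.antisymm
    · refine Set.iUnion_subset fun j => D_mono A (Order.lt_succ_iff.mp ?_)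
      rw [← Ordinal.add_one_eq_succ]
      exact j.2
    · exact Set.subset_iUnion (fun j : ↥(Set.Iio (i0 + 1)) => D A j.1)
        ⟨i0, by rw [Set.mem_Iio, Ordinal.add_one_eq_succ]; exact Order.lt_succ i0⟩
  have hD1 : D A (i0 + 1) = step A (D A i0) := by rw [D_eq, hUeq]
  obtain ⟨q, hq, hqt, hqb⟩ := wit_spec A
    (⟨p, hp, rfl⟩ : ∃ r ∈ A, trace r (D A i0) = trace p (D A i0))
  have hwit : wit A (D A i0) (trace p (D A i0)) ⊆ D A (i0 + 1) := by
    rw [hD1, step]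
    exact (Set.subset_biUnion_of_mem (u := wit A (D A i0))
      (show trace p (D A i0) ∈ (fun r => trace r (D A i0)) '' A from
        Set.mem_image_of_mem _ hp)).trans Set.subset_union_right
  have hsucc : i0 + 1 < omega1.{0} := succ_lt_omega1 hi0
  have hDsub : D A (i0 + 1) ⊆ Dfin A :=
    Set.subset_iUnion (fun j : ↥(Set.Iio omega1.{0}) => D A j.1) ⟨i0 + 1, hsucc⟩
  have hqDfin : q.bdom ⊆ Dfin A := (hqb.trans hwit).trans hDsub
  rw [trace, trace, Prod.mk.injEq, Prod.mk.injEq] at hqt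
  obtain ⟨h1, h2, h3⟩ := hqt
  have hagree : ∀ x (hxp : x ∈ p.bdom) (hxq : x ∈ q.bdom), p.b ⟨x, hxp⟩ = q.b ⟨x, hxq⟩ := by
    intro x hxp hxq
    have hxD : x ∈ D A i0 := hsub ⟨hxp, hqDfin hxq⟩
    have hmem := (Set.ext_iff.1 h3 (x, p.b ⟨x, hxp⟩)).2 ⟨hxD, hxp, rfl⟩
    obtain ⟨-, hq', hv⟩ := hmem
    exact hv.symm
  by_cases hpq : p = q
  · rw [hpq]; exact hqDfin
  · exact absurd (merge p q h1 h2 hagree) (hA p hp q hq hpq)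

end StewartACC

/-- Assume CH. For every cardinal `κ > ℵ₁`, the Stewart poset `𝕊_κ`
satisfies the ℵ₂-chain condition: every antichain (set of pairwise incompatible
conditions) has cardinality at most ℵ₁. -/
theorem statement14 (hCH : (2 : Cardinal.{1}) ^ Cardinal.aleph 0 = Cardinal.aleph 1)
    (K : Type 1) (hK : Cardinal.aleph 1 < #K)
    (A : Set (Stewart K))
    (hA : ∀ p ∈ A, ∀ q ∈ A, p ≠ q → ¬ ∃ r : Stewart K, r.le p ∧ r.le q) :
    #(↥A) ≤ Cardinal.aleph 1 := by
  classical
  open StewartACC in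
  have hDfin : #(↥(Dfin A)) ≤ Cardinal.aleph 1 := mk_Dfin A hCH
  have hGT : #(↥(GT (Dfin A))) ≤ Cardinal.aleph 1 := mk_GT hCH hDfin
  have hinj : Function.Injective (fun p : ↥A =>
      (⟨trace p.1 (Dfin A), trace_mem_GT p.1 _⟩ : ↥(GT (Dfin A)))) := by
    rintro ⟨p, hp⟩ ⟨q, hq⟩ h
    simp only [Subtype.mk.injEq] at h ⊢
    rw [trace, trace, Prod.mk.injEq, Prod.mk.injEq] at h
    obtain ⟨h1, h2, h3⟩ := h
    have hpD := bdom_subset_Dfin A hA hp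
    have hqD := bdom_subset_Dfin A hA hq
    have hdom : p.bdom = q.bdom := by
      ext x
      constructor
      · intro hx
        obtain ⟨-, hh, -⟩ := (Set.ext_iff.1 h3 (x, p.b ⟨x, hx⟩)).1 ⟨hpD hx, hx, rfl⟩
        exact hh
      · intro hx
        obtain ⟨-, hh, -⟩ := (Set.ext_iff.1 h3 (x, q.b ⟨x, hx⟩)).2 ⟨hqD hx, hx, rfl⟩
        exact hh
    refine Stewart.ext' h1 h2 hdom ?_
    intro x hxp hxq
    obtain ⟨-, hh, hv⟩ := (Set.ext_iff.1 h3 (x, p.b ⟨x, hxp⟩)).1 ⟨hpD hxp, hxp, rfl⟩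
    exact hv.symm
  exact le_trans (Cardinal.mk_le_of_injective hinj) hGT
end
end

section
/- Let T be a downward-closed family of functions t : α → ω (α < ω₁) such that (T, ⊊) is an ℵ₁-tree in which every node admits infinitely many immediate successors. For each α < ω₁ fix an injection φ_α : T_{α+1} → ω, and define r_m : ω → 2 by r_m(n) = 1 iff n < m (so that the first point of disagreement of r_m and r_{m'} is min{m, m'} for m ≠ m'). Define ψ : T → ⋃_{β<ω₁}{h : β → 2} recursively by: ψ(∅) = ∅; ψ(t) = ⋃{ψ(t') | t' ⊊ t, t' ∈ T} for t of limit height; and ψ(t) = ψ(t⁻)⌢r_{φ_α(t)} for t ∈ T_{α+1}, where t⁻ = t↾α is the immediate predecessor of t (so dom(ψ(t)) = ω·h(t), where h(t) = dom(t)). Let S := {s↾β | s ∈ im(ψ), β ≤ dom(s)}. Then S is a binary ℵ₁-tree, and every automorphism of (S, ⊊) is the identity map. -/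
noncomputable section

open Cardinal Set

/-- A transfinite sequence of natural numbers: a function `t : α → ω` for an ordinal `α`. -/
abbrev OmSeq : Type 1 := Σ α : Ordinal, (Set.Iio α → ℕ)

/-- Restriction of an `OmSeq` to an initial segment of its domain. -/
def OmSeq.restrict (t : OmSeq) (β : Ordinal) (h : β ≤ t.1) : OmSeq :=
  ⟨β, fun x => t.2 ⟨x.1, lt_of_lt_of_le x.2 h⟩⟩

/-- `s.sub t`: `s` is an initial segment of `t`. -/
def OmSeq.sub (s t : OmSeq) : Prop := ∃ h : s.1 ≤ t.1, t.restrict s.1 h = s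


namespace BinSeq

lemma val_eq {a b : BinSeq} (h : a = b) (x : Ordinal) (hx : x < a.1) (hx' : x < b.1) :
    a.2 ⟨x, hx⟩ = b.2 ⟨x, hx'⟩ := by subst h; rfl

lemma ext2 {a b : BinSeq} (h1 : a.1 = b.1)
    (h2 : ∀ x (hx : x < a.1) (hx' : x < b.1), a.2 ⟨x, hx⟩ = b.2 ⟨x, hx'⟩) : a = b := by
  obtain ⟨α, f⟩ := a; obtain ⟨β, g⟩ := b
  dsimp at h1; subst h1
  have : f = g := funext fun x => h2 x.1 x.2 x.2
  rw [this]

lemma sub_apply {a b : BinSeq} (h : a.sub b) (x : Ordinal) (hx : x < a.1) (hx' : x < b.1) :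
    a.2 ⟨x, hx⟩ = b.2 ⟨x, hx'⟩ := by
  obtain ⟨hle, he⟩ := h
  exact (val_eq he x hx hx).symm

lemma restrict_sub (b : BinSeq) (β : Ordinal) (h : β ≤ b.1) : (b.restrict β h).sub b := ⟨h, rfl⟩

lemma restrict_ssub (b : BinSeq) (β : Ordinal) (h : β ≤ b.1) (h' : β < b.1) :
    (b.restrict β h).ssub b := ⟨h', rfl⟩

lemma sub_iff {a b : BinSeq} : a.sub b ↔ (a.1 ≤ b.1 ∧
    ∀ x (hx : x < a.1) (hx' : x < b.1), a.2 ⟨x, hx⟩ = b.2 ⟨x, hx'⟩) := by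
  constructor
  · intro h; exact ⟨h.1, fun x hx hx' => sub_apply h x hx hx'⟩
  · rintro ⟨hle, hv⟩
    exact ⟨hle, ext2 rfl (fun x hx hx' => (hv x hx' (lt_of_lt_of_le hx hle)).symm)⟩

lemma ssub_iff {a b : BinSeq} : a.ssub b ↔ (a.1 < b.1 ∧
    ∀ x (hx : x < a.1) (hx' : x < b.1), a.2 ⟨x, hx⟩ = b.2 ⟨x, hx'⟩) := by
  constructor
  · rintro ⟨hlt, he⟩; exact ⟨hlt, fun x hx hx' => sub_apply ⟨hlt.le, he⟩ x hx hx'⟩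
  · rintro ⟨hlt, hv⟩
    exact ⟨hlt, ext2 rfl (fun x hx hx' => (hv x hx' (lt_of_lt_of_le hx hlt.le)).symm)⟩

lemma sub_refl (a : BinSeq) : a.sub a := sub_iff.2 ⟨le_rfl, fun _ _ _ => rfl⟩

lemma sub_trans {a b c : BinSeq} (h1 : a.sub b) (h2 : b.sub c) : a.sub c := by
  rw [sub_iff] at *
  exact ⟨h1.1.trans h2.1, fun x hx hx' => (h1.2 x hx (lt_of_lt_of_le hx h1.1)).trans
    (h2.2 x (lt_of_lt_of_le hx h1.1) hx')⟩

lemma sub_iff_ssub_or_eq {a b : BinSeq} : a.sub b ↔ (a.ssub b ∨ a = b) := by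
  rw [sub_iff, ssub_iff]
  constructor
  · rintro ⟨hle, hv⟩
    rcases lt_or_eq_of_le hle with h | h
    · exact Or.inl ⟨h, hv⟩
    · exact Or.inr (ext2 h (fun x hx hx' => hv x hx hx'))
  · rintro (⟨hlt, hv⟩ | rfl)
    · exact ⟨hlt.le, hv⟩
    · exact ⟨le_rfl, fun _ _ _ => rfl⟩

end BinSeq

lemma st15_lt_omega1_iff {a : Ordinal} : a < omega1 ↔ a.card < Cardinal.aleph 1 :=
  Cardinal.lt_ord

lemma st15_mul_om_lt {a : Ordinal} (h : a < omega1) : Ordinal.omega0 * a < omega1 := by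
  rw [st15_lt_omega1_iff] at *
  rw [Ordinal.card_mul, Ordinal.card_omega0]
  exact Cardinal.mul_lt_of_lt (Cardinal.aleph0_le_aleph 1) Cardinal.aleph0_lt_aleph_one h

lemma st15_succ_lt_omega1 {a : Ordinal} (h : a < omega1) : a + 1 < omega1 := by
  rw [Ordinal.add_one_eq_succ]
  exact (Cardinal.isSuccLimit_ord (Cardinal.aleph0_le_aleph 1)).succ_lt h

lemma st15_Iio_countable {o : Ordinal.{0}} (h : o < omega1) : (Set.Iio o).Countable := by
  rw [Cardinal.countable_iff_lt_aleph_one, Ordinal.mk_Iio_ordinal]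
  have h2 : (Cardinal.lift.{1} (Cardinal.aleph 1)) = Cardinal.aleph (Ordinal.lift.{1} 1) :=
    Cardinal.lift_aleph.{0,1} 1
  simp only [Ordinal.lift_one] at h2
  rw [← h2, Cardinal.lift_lt]
  exact st15_lt_omega1_iff.1 h

lemma st15_Iic_countable {o : Ordinal.{0}} (h : o < omega1) : (Set.Iic o).Countable := by
  have he : Set.Iic o = Set.Iio (o + 1) := by
    ext x; rw [Set.mem_Iic, Set.mem_Iio, Ordinal.add_one_eq_succ, Order.lt_succ_iff]
  rw [he]
  exact st15_Iio_countable (st15_succ_lt_omega1 h)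

lemma st15_div_eq {α q : Ordinal} (hqω : q < Ordinal.omega0) :
    (Ordinal.omega0 * α + q) / Ordinal.omega0 = α := by
  apply le_antisymm
  · have h := (Ordinal.div_lt Ordinal.omega0_ne_zero).2
      (show Ordinal.omega0 * α + q < Ordinal.omega0 * (α + 1) by
        rw [Ordinal.add_one_eq_succ, Ordinal.mul_succ]; exact (add_lt_add_iff_left _).2 hqω)
    rwa [Ordinal.add_one_eq_succ, Order.lt_succ_iff] at h
  · rw [Ordinal.le_div Ordinal.omega0_ne_zero]; exact le_self_add

lemma st15_decomp {p α : Ordinal} (hp : p < Ordinal.omega0 * (α + 1)) :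
    p < Ordinal.omega0 * α ∨ ∃ k : ℕ, p = Ordinal.omega0 * α + k := by
  rcases lt_or_ge p (Ordinal.omega0 * α) with h | h
  · exact Or.inl h
  · right
    have he : Ordinal.omega0 * α + (p - Ordinal.omega0 * α) = p :=
      Ordinal.add_sub_cancel_of_le h
    have h2 : p - Ordinal.omega0 * α < Ordinal.omega0 := by
      rw [Ordinal.add_one_eq_succ, Ordinal.mul_succ] at hp
      rw [← he] at hp
      exact (add_lt_add_iff_left _).1 hp
    obtain ⟨k, hk⟩ := Ordinal.lt_omega0.1 h2
    exact ⟨k, by rw [← he, hk]⟩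

lemma st15_lt_add_one (o : Ordinal) : o < o + 1 := by
  rw [Ordinal.add_one_eq_succ]; exact Order.lt_succ o

lemma st15_add_one_le {a b : Ordinal} (h : a < b) : a + 1 ≤ b := by
  rw [Ordinal.add_one_eq_succ]; exact Order.succ_le_iff.2 h


/-- Auxiliary splitting predicate used in the rigidity proof. -/
@[reducible] def st15Q (S : Set BinSeq) (s : BinSeq) : Prop :=
  ∃ y ∈ S, ∃ z ∈ S, BinSeq.sub s y ∧ BinSeq.sub s z ∧ y.1 = z.1 ∧
    y.1 < Ordinal.omega0 * (s.1 / Ordinal.omega0 + 1) ∧ y ≠ z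

/-- Let `T` be a downward-closed family of functions `t : α → ω` (`α < ω₁`)
such that `(T, ⊊)` is an ℵ₁-tree in which every node admits infinitely many immediate
successors. Fix injections `φ_α : T_{α+1} → ω`, let `r_m : ω → 2` be given by
`r_m(n) = 1 ↔ n < m`, and let `ψ : T → <ω₁2` be the recursively defined map with
`dom(ψ(t)) = ω · dom(t)`, `ψ(t ↾ β) ⊆ ψ(t)`, and `ψ(t) = ψ(t⁻) ⌢ r_{φ_α(t)}` for
`t ∈ T_{α+1}` (so `ψ(t)(ω·α + n) = r_{φ_α(t)}(n)`). Let `S` be the downward closure of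
the image of `ψ`. Then `S` is a binary ℵ₁-tree and every automorphism of `(S, ⊊)` is
the identity. -/
theorem statement15 (T : Set OmSeq)
    (hdom : ∀ t ∈ T, t.1 < omega1)
    (hdc : ∀ t ∈ T, ∀ β, ∀ h : β ≤ t.1, t.restrict β h ∈ T)
    (hcnt : ∀ α < omega1, {t | t ∈ T ∧ t.1 = α}.Countable)
    (hne : ∀ α < omega1, {t | t ∈ T ∧ t.1 = α}.Nonempty)
    (hsplit : ∀ t ∈ T, {t' | t' ∈ T ∧ t'.1 = t.1 + 1 ∧ t.sub t'}.Infinite)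
    (φ : Ordinal → OmSeq → ℕ)
    (hφ : ∀ α, Set.InjOn (φ α) {t | t ∈ T ∧ t.1 = α + 1})
    (ψ : OmSeq → BinSeq)
    (hψdom : ∀ t ∈ T, (ψ t).1 = Ordinal.omega0 * t.1)
    (hψmono : ∀ t ∈ T, ∀ β, ∀ h : β ≤ t.1, BinSeq.sub (ψ (t.restrict β h)) (ψ t))
    (hψsucc : ∀ t ∈ T, ∀ α, t.1 = α + 1 → ∀ n : ℕ,
      ∀ h : Ordinal.omega0 * α + (n : Ordinal) < (ψ t).1,
        (ψ t).2 ⟨Ordinal.omega0 * α + (n : Ordinal), h⟩ = decide (n < φ α t))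
    (S : Set BinSeq)
    (hS : S = {s | ∃ t ∈ T, BinSeq.sub s (ψ t)}) :
    IsBinaryAleph1Tree S ∧
    ∀ π : BinSeq → BinSeq, Set.BijOn π S S →
      (∀ s ∈ S, ∀ s' ∈ S, BinSeq.ssub s s' ↔ BinSeq.ssub (π s) (π s')) →
      ∀ s ∈ S, π s = s := by
  classical
  have hSm : ∀ s : BinSeq, s ∈ S ↔ ∃ t ∈ T, BinSeq.sub s (ψ t) := by
    intro s; rw [hS]; exact Iff.rfl
  have hSdc : ∀ s ∈ S, ∀ β, ∀ h : β ≤ s.1, s.restrict β h ∈ S := by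
    intro s hs β h
    obtain ⟨t, ht, hsub⟩ := (hSm s).1 hs
    exact (hSm _).2 ⟨t, ht, BinSeq.sub_trans (BinSeq.restrict_sub s β h) hsub⟩
  have hSdom : ∀ s ∈ S, s.1 < omega1 := by
    intro s hs
    obtain ⟨t, ht, hsub⟩ := (hSm s).1 hs
    have h1 := hsub.fst
    rw [hψdom t ht] at h1
    exact lt_of_le_of_lt h1 (st15_mul_om_lt (hdom t ht))
  have hblock : ∀ t, ∀ _ht : t ∈ T, ∀ α, ∀ hα : α + 1 ≤ t.1, ∀ (k : ℕ)
      (hp : Ordinal.omega0 * α + (k : Ordinal) < (ψ t).1),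
      (ψ t).2 ⟨Ordinal.omega0 * α + (k : Ordinal), hp⟩
        = decide (k < φ α (t.restrict (α+1) hα)) := by
    intro t ht α hα k hp
    have hu : t.restrict (α+1) hα ∈ T := hdc t ht _ hα
    have hsub := hψmono t ht (α+1) hα
    have hp' : Ordinal.omega0 * α + (k : Ordinal) < (ψ (t.restrict (α+1) hα)).1 := by
      rw [hψdom _ hu]
      show Ordinal.omega0 * α + (k : Ordinal) < Ordinal.omega0 * (α + 1)
      rw [Ordinal.add_one_eq_succ, Ordinal.mul_succ]
      exact (add_lt_add_iff_left _).2 (Ordinal.nat_lt_omega0 k)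
    rw [← BinSeq.sub_apply hsub _ hp' hp]
    exact hψsucc _ hu α rfl k hp'
  have hval : ∀ s, s ∈ S → ∀ t, t ∈ T → BinSeq.sub s (ψ t) → ∀ α, ∀ hα : α + 1 ≤ t.1,
      ∀ (k : ℕ) (hk : Ordinal.omega0 * α + (k : Ordinal) < s.1),
      s.2 ⟨Ordinal.omega0 * α + (k : Ordinal), hk⟩
        = decide (k < φ α (t.restrict (α+1) hα)) := by
    intro s hs t ht hsub α hα k hk
    have hk' : Ordinal.omega0 * α + (k : Ordinal) < (ψ t).1 := lt_of_lt_of_le hk hsub.fst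
    rw [BinSeq.sub_apply hsub _ hk hk']
    exact hblock t ht α hα k hk'
  have hαle : ∀ (t : OmSeq), t ∈ T → ∀ (α : Ordinal) (x : Ordinal),
      Ordinal.omega0 * α ≤ x → x < (ψ t).1 → α + 1 ≤ t.1 := by
    intro t ht α x h1 h2
    rw [hψdom t ht] at h2
    have h3 : Ordinal.omega0 * α < Ordinal.omega0 * t.1 := lt_of_le_of_lt h1 h2
    exact st15_add_one_le (lt_of_mul_lt_mul_left h3 zero_le)
  have hlevS : ∀ α < omega1, {s | s ∈ S ∧ s.1 = α}.Countable := by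
    intro α hα
    have hcntA : {t | t ∈ T ∧ t.1 ≤ α}.Countable := by
      have he : {t | t ∈ T ∧ t.1 ≤ α} = ⋃ β ∈ Set.Iic α, {t | t ∈ T ∧ t.1 = β} := by
        ext t
        simp only [Set.mem_setOf_eq, Set.mem_iUnion, Set.mem_Iic]
        constructor
        · rintro ⟨h1, h2⟩; exact ⟨t.1, h2, h1, rfl⟩
        · rintro ⟨β, hβ, h1, h2⟩; exact ⟨h1, h2 ▸ hβ⟩
      rw [he]
      exact Set.Countable.biUnion (st15_Iic_countable hα)
        (fun β hβ => hcnt β (lt_of_le_of_lt hβ hα))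
    have hsubset : {s | s ∈ S ∧ s.1 = α} ⊆
        (fun t : OmSeq => if h : α ≤ (ψ t).1 then (ψ t).restrict α h
          else ⟨0, fun _ => false⟩) '' {t | t ∈ T ∧ t.1 ≤ α} := by
      rintro s ⟨hsS, hs1⟩
      obtain ⟨t, ht, hsub⟩ := (hSm s).1 hsS
      rcases le_or_gt t.1 α with h1 | h1
      · refine ⟨t, ⟨ht, h1⟩, ?_⟩
        have hle : α ≤ (ψ t).1 := hs1 ▸ hsub.fst
        simp only [dif_pos hle]
        apply BinSeq.ext2 hs1.symm
        intro x hx hx'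
        exact (BinSeq.sub_apply hsub x hx' (lt_of_lt_of_le (show x < α from hx) hle)).symm
      · refine ⟨t.restrict α h1.le, ⟨hdc t ht α h1.le, le_rfl⟩, ?_⟩
        have hu : t.restrict α h1.le ∈ T := hdc t ht α h1.le
        have hle : α ≤ (ψ (t.restrict α h1.le)).1 := by
          rw [hψdom _ hu]
          exact Ordinal.le_mul_right α Ordinal.omega0_pos
        simp only [dif_pos hle]
        have hmsub := hψmono t ht α h1.le
        apply BinSeq.ext2 hs1.symm
        intro x hx hx'
        have hx2 : x < (ψ (t.restrict α h1.le)).1 :=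
          lt_of_lt_of_le (show x < α from hx) hle
        have hx3 : x < (ψ t).1 := lt_of_lt_of_le hx2 hmsub.fst
        calc ((ψ (t.restrict α h1.le)).restrict α hle).2 ⟨x, hx⟩
            = (ψ (t.restrict α h1.le)).2 ⟨x, hx2⟩ := rfl
          _ = (ψ t).2 ⟨x, hx3⟩ := BinSeq.sub_apply hmsub x hx2 hx3
          _ = s.2 ⟨x, hx'⟩ := (BinSeq.sub_apply hsub x hx' hx3).symm
    exact Set.Countable.mono hsubset (Set.Countable.image hcntA _)
  refine ⟨⟨hSdom, hSdc, hlevS⟩, ?_⟩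
  intro π hbij hiff
  set σ : BinSeq → BinSeq := Function.invFunOn π S with hσdef
  have hinv : Set.InvOn σ π S S := hbij.invOn_invFunOn
  have hσmaps : Set.MapsTo σ S S := hbij.surjOn.mapsTo_invFunOn
  have hσπ : ∀ x ∈ S, σ (π x) = x := fun x hx => hinv.1 hx
  have hπσ : ∀ x ∈ S, π (σ x) = x := fun x hx => hinv.2 hx
  have hπmono : ∀ a ∈ S, ∀ b ∈ S, BinSeq.ssub a b → BinSeq.ssub (π a) (π b) :=
    fun a ha b hb h => (hiff a ha b hb).1 h
  have hσmono : ∀ a ∈ S, ∀ b ∈ S, BinSeq.ssub a b → BinSeq.ssub (σ a) (σ b) := by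
    intro a ha b hb h
    apply (hiff (σ a) (hσmaps ha) (σ b) (hσmaps hb)).2
    rwa [hπσ a ha, hπσ b hb]
  have hlevle : ∀ (p : BinSeq → BinSeq), Set.MapsTo p S S →
      (∀ a ∈ S, ∀ b ∈ S, BinSeq.ssub a b → BinSeq.ssub (p a) (p b)) →
      ∀ β, ∀ s ∈ S, s.1 = β → β ≤ (p s).1 := by
    intro p hmap hmono β
    induction β using Ordinal.induction with
    | h β IH =>
      intro s hs hs1
      by_contra hcon
      push_neg at hcon
      have hγβ : (p s).1 < β := hcon
      have hγs : (p s).1 ≤ s.1 := hs1 ▸ hγβ.le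
      have h1 : s.restrict (p s).1 hγs ∈ S := hSdc s hs (p s).1 hγs
      have h2 : BinSeq.ssub (s.restrict (p s).1 hγs) s :=
        BinSeq.restrict_ssub s (p s).1 hγs (hs1 ▸ hγβ)
      have h3 := hmono _ h1 s hs h2
      have h4 : (p s).1 ≤ (p (s.restrict (p s).1 hγs)).1 := IH (p s).1 hγβ _ h1 rfl
      exact absurd (lt_of_le_of_lt h4 h3.fst) (lt_irrefl (p s).1)
  have hlev1 : ∀ s ∈ S, (π s).1 = s.1 := by
    intro s hs
    apply le_antisymm
    · have h1 := hlevle σ hσmaps hσmono (π s).1 (π s) (hbij.mapsTo hs) rfl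
      rwa [hσπ s hs] at h1
    · exact hlevle π hbij.mapsTo hπmono s.1 s hs rfl
  have hσlev : ∀ s ∈ S, (σ s).1 = s.1 := by
    intro s hs
    have h1 := hlev1 (σ s) (hσmaps hs)
    rw [hπσ s hs] at h1
    exact h1.symm
  have hπsub : ∀ a ∈ S, ∀ b ∈ S, BinSeq.sub a b → BinSeq.sub (π a) (π b) := by
    intro a ha b hb h
    rcases BinSeq.sub_iff_ssub_or_eq.1 h with h' | rfl
    · exact BinSeq.sub_iff_ssub_or_eq.2 (Or.inl (hπmono a ha b hb h'))
    · exact BinSeq.sub_refl _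
  have hσsub : ∀ a ∈ S, ∀ b ∈ S, BinSeq.sub a b → BinSeq.sub (σ a) (σ b) := by
    intro a ha b hb h
    rcases BinSeq.sub_iff_ssub_or_eq.1 h with h' | rfl
    · exact BinSeq.sub_iff_ssub_or_eq.2 (Or.inl (hσmono a ha b hb h'))
    · exact BinSeq.sub_refl _
  have hQinv : ∀ s ∈ S, (st15Q S s ↔ st15Q S (π s)) := by
    intro s hs
    constructor
    · rintro ⟨y, hy, z, hz, hsy, hsz, hyz, hbd, hne⟩
      refine ⟨π y, hbij.mapsTo hy, π z, hbij.mapsTo hz,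
        hπsub s hs y hy hsy, hπsub s hs z hz hsz, ?_, ?_, ?_⟩
      · rw [hlev1 y hy, hlev1 z hz]; exact hyz
      · rw [hlev1 y hy, hlev1 s hs]; exact hbd
      · intro h; exact hne (hbij.injOn hy hz h)
    · rintro ⟨y, hy, z, hz, hsy, hsz, hyz, hbd, hne⟩
      have h1 := hσsub (π s) (hbij.mapsTo hs) y hy hsy
      have h2 := hσsub (π s) (hbij.mapsTo hs) z hz hsz
      rw [hσπ s hs] at h1 h2
      rw [hlev1 s hs] at hbd
      refine ⟨σ y, hσmaps hy, σ z, hσmaps hz, h1, h2, ?_, ?_, ?_⟩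
      · rw [hσlev y hy, hσlev z hz]; exact hyz
      · rw [hσlev y hy]; exact hbd
      · intro h; apply hne; rw [← hπσ y hy, ← hπσ z hz, h]
  have hwdet : ∀ s ∈ S, ∀ t, t ∈ T → BinSeq.sub s (ψ t) → ∀ (α : Ordinal) (hα : α+1 ≤ t.1)
      (n : ℕ), s.1 = Ordinal.omega0 * α + ((n+1 : ℕ) : Ordinal) →
      ¬ n < φ α (t.restrict (α+1) hα) →
      ∀ w ∈ S, BinSeq.sub s w → ∀ (k : ℕ) (hx : Ordinal.omega0 * α + (k:Ordinal) < w.1),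
      w.2 ⟨Ordinal.omega0 * α + (k:Ordinal), hx⟩
        = decide (k < φ α (t.restrict (α+1) hα)) := by
    intro s hs t ht hsub α hα n hs1 hnm w hw hsw k hx
    obtain ⟨t₁, ht₁, hwsub⟩ := (hSm w).1 hw
    have hα₁ : α + 1 ≤ t₁.1 := hαle t₁ ht₁ α _ le_self_add
      (lt_of_lt_of_le hx hwsub.fst)
    have hpos : ∀ j : ℕ, j ≤ n → Ordinal.omega0 * α + (j:Ordinal) < s.1 := by
      intro j hj
      rw [hs1]
      exact (add_lt_add_iff_left _).2 (by exact_mod_cast Nat.lt_succ_of_le hj)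
    have hwv : ∀ (j : ℕ) (hj : Ordinal.omega0 * α + (j:Ordinal) < w.1),
        w.2 ⟨Ordinal.omega0 * α + (j:Ordinal), hj⟩
          = decide (j < φ α (t₁.restrict (α+1) hα₁)) := fun j hj =>
      hval w hw t₁ ht₁ hwsub α hα₁ j hj
    have hagree : ∀ j : ℕ, j ≤ n →
        decide (j < φ α (t.restrict (α+1) hα))
          = decide (j < φ α (t₁.restrict (α+1) hα₁)) := by
      intro j hj
      have h1 := hval s hs t ht hsub α hα j (hpos j hj)
      have h2 := hwv j (lt_of_lt_of_le (hpos j hj) hsw.fst)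
      rw [← h1, ← h2]
      exact BinSeq.sub_apply hsw _ (hpos j hj) _
    have hmeq : φ α (t₁.restrict (α+1) hα₁) = φ α (t.restrict (α+1) hα) := by
      have hm'n : φ α (t.restrict (α+1) hα) ≤ n := Nat.not_lt.1 hnm
      have h1 : ¬ φ α (t.restrict (α+1) hα) < φ α (t₁.restrict (α+1) hα₁) := by
        have h3 := hagree _ hm'n
        simp only [decide_eq_decide] at h3
        intro hcon
        exact absurd (h3.2 hcon) (lt_irrefl _)
      have h2 : ¬ φ α (t₁.restrict (α+1) hα₁) < φ α (t.restrict (α+1) hα) := by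
        intro hcon
        have h3 := hagree _ (le_trans (Nat.le_of_lt hcon) hm'n)
        simp only [decide_eq_decide] at h3
        exact absurd (h3.1 hcon) (lt_irrefl _)
      omega
    rw [hwv k hx, hmeq]
  have hQoff : ∀ s ∈ S, ∀ t, t ∈ T → BinSeq.sub s (ψ t) → ∀ (α : Ordinal) (hα : α+1 ≤ t.1)
      (n : ℕ), s.1 = Ordinal.omega0 * α + ((n+1 : ℕ) : Ordinal) →
      ¬ n < φ α (t.restrict (α+1) hα) → ¬ st15Q S s := by
    rintro s hs t ht hsub α hα n hs1 hnm ⟨y, hy, z, hz, hsy, hsz, hyz, hbd, hne⟩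
    apply hne
    have hdq : s.1 / Ordinal.omega0 = α := by
      rw [hs1]; exact st15_div_eq (Ordinal.nat_lt_omega0 (n+1))
    rw [hdq] at hbd
    apply BinSeq.ext2 hyz
    intro x hx hx'
    rcases st15_decomp (lt_trans hx hbd) with hcase | ⟨k, hk⟩
    · have hxs : x < s.1 := by
        rw [hs1]
        exact lt_of_lt_of_le hcase le_self_add
      rw [← BinSeq.sub_apply hsy x hxs hx, ← BinSeq.sub_apply hsz x hxs hx']
    · subst hk
      rw [hwdet s hs t ht hsub α hα n hs1 hnm y hy hsy k hx,
          hwdet s hs t ht hsub α hα n hs1 hnm z hz hsz k hx']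
  have hQspine : ∀ s ∈ S, ∀ t, t ∈ T → BinSeq.sub s (ψ t) → ∀ (α : Ordinal) (hα : α+1 ≤ t.1)
      (n : ℕ), s.1 = Ordinal.omega0 * α + ((n+1 : ℕ) : Ordinal) →
      n < φ α (t.restrict (α+1) hα) → st15Q S s := by
    intro s hs t ht hsub α hα n hs1 hnm
    have hαle' : α ≤ t.1 := le_trans le_self_add hα
    have huT : t.restrict α hαle' ∈ T := hdc t ht α hαle'
    have hinf := hsplit _ huT
    have hinj : Set.InjOn (φ α)
        {t' | t' ∈ T ∧ t'.1 = (t.restrict α hαle').1 + 1 ∧ OmSeq.sub (t.restrict α hαle') t'} :=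
      (hφ α).mono (by intro t' ht'; exact ⟨ht'.1, ht'.2.1⟩)
    obtain ⟨v, hv, hmv⟩ : ∃ v ∈ {t' | t' ∈ T ∧ t'.1 = (t.restrict α hαle').1 + 1 ∧
        OmSeq.sub (t.restrict α hαle') t'}, φ α (t.restrict (α+1) hα) < φ α v := by
      obtain ⟨b, hb, hmb⟩ := (Set.Infinite.image hinj hinf).exists_gt (φ α (t.restrict (α+1) hα))
      obtain ⟨v, hv, rfl⟩ := hb
      exact ⟨v, hv, hmb⟩
    obtain ⟨hvT, hv1, huv⟩ := hv
    have hu₁T : t.restrict (α+1) hα ∈ T := hdc t ht _ hα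
    set m := φ α (t.restrict (α+1) hα) with hm
    have hlam1 : Ordinal.omega0 * α + ((m+1 : ℕ) : Ordinal) ≤ (ψ (t.restrict (α+1) hα)).1 := by
      rw [hψdom _ hu₁T]
      show Ordinal.omega0 * α + ((m+1 : ℕ) : Ordinal) ≤ Ordinal.omega0 * (α+1)
      rw [Ordinal.add_one_eq_succ, Ordinal.mul_succ]
      exact le_of_lt ((add_lt_add_iff_left _).2 (Ordinal.nat_lt_omega0 (m+1)))
    have hlam2 : Ordinal.omega0 * α + ((m+1 : ℕ) : Ordinal) ≤ (ψ v).1 := by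
      rw [hψdom _ hvT]
      have hveq : Ordinal.omega0 * v.1 = Ordinal.omega0 * (α+1) := by rw [hv1]; rfl
      rw [hveq]
      rw [Ordinal.add_one_eq_succ, Ordinal.mul_succ]
      exact le_of_lt ((add_lt_add_iff_left _).2 (Ordinal.nat_lt_omega0 (m+1)))
    have hyS : (ψ (t.restrict (α+1) hα)).restrict _ hlam1 ∈ S :=
      (hSm _).2 ⟨_, hu₁T, BinSeq.restrict_sub _ _ _⟩
    have hzS : (ψ v).restrict _ hlam2 ∈ S :=
      (hSm _).2 ⟨v, hvT, BinSeq.restrict_sub _ _ _⟩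
    have hslam : s.1 ≤ Ordinal.omega0 * α + ((m+1 : ℕ) : Ordinal) := by
      rw [hs1]
      exact (add_le_add_iff_left _).2 (by exact_mod_cast Nat.succ_le_succ hnm.le)
    have hsble : s.1 ≤ Ordinal.omega0 * (α+1) := by
      rw [hs1, Ordinal.add_one_eq_succ, Ordinal.mul_succ]
      exact le_of_lt ((add_lt_add_iff_left _).2 (Ordinal.nat_lt_omega0 _))
    have hψut : BinSeq.sub (ψ (t.restrict α hαle')) (ψ t) := hψmono t ht α hαle'
    have hψuv : BinSeq.sub (ψ (t.restrict α hαle')) (ψ v) := by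
      obtain ⟨hle', he'⟩ := huv
      have h5 := hψmono v hvT _ hle'
      rwa [he'] at h5
    have hψu₁t : BinSeq.sub (ψ (t.restrict (α+1) hα)) (ψ t) := hψmono t ht (α+1) hα
    have hψudom : (ψ (t.restrict α hαle')).1 = Ordinal.omega0 * α := hψdom _ huT
    have hsy : BinSeq.sub s ((ψ (t.restrict (α+1) hα)).restrict _ hlam1) := by
      rw [BinSeq.sub_iff]
      refine ⟨hslam, ?_⟩
      intro x hx hx'
      have hxt : x < (ψ t).1 := lt_of_lt_of_le hx hsub.fst
      have hxu₁ : x < (ψ (t.restrict (α+1) hα)).1 :=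
        lt_of_lt_of_le (show x < Ordinal.omega0 * α + ((m+1 : ℕ) : Ordinal) from hx') hlam1
      calc s.2 ⟨x, hx⟩ = (ψ t).2 ⟨x, hxt⟩ := BinSeq.sub_apply hsub x hx hxt
        _ = (ψ (t.restrict (α+1) hα)).2 ⟨x, hxu₁⟩ :=
            (BinSeq.sub_apply hψu₁t x hxu₁ hxt).symm
        _ = ((ψ (t.restrict (α+1) hα)).restrict _ hlam1).2 ⟨x, hx'⟩ := rfl
    have hsz : BinSeq.sub s ((ψ v).restrict _ hlam2) := by
      rw [BinSeq.sub_iff]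
      refine ⟨hslam, ?_⟩
      intro x hx hx'
      have hxv : x < (ψ v).1 :=
        lt_of_lt_of_le (show x < Ordinal.omega0 * α + ((m+1 : ℕ) : Ordinal) from hx') hlam2
      have hxs : x < s.1 := hx
      rcases st15_decomp (lt_of_lt_of_le hxs hsble) with hcase | ⟨k, hk⟩
      · have hxu : x < (ψ (t.restrict α hαle')).1 := by rw [hψudom]; exact hcase
        have hxt : x < (ψ t).1 := lt_of_lt_of_le hx hsub.fst
        calc s.2 ⟨x, hx⟩ = (ψ t).2 ⟨x, hxt⟩ := BinSeq.sub_apply hsub x hx hxt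
          _ = (ψ (t.restrict α hαle')).2 ⟨x, hxu⟩ :=
              (BinSeq.sub_apply hψut x hxu hxt).symm
          _ = (ψ v).2 ⟨x, hxv⟩ := BinSeq.sub_apply hψuv x hxu hxv
          _ = ((ψ v).restrict _ hlam2).2 ⟨x, hx'⟩ := rfl
      · subst hk
        have hkn : k ≤ n := by
          have h6 := hxs
          rw [hs1] at h6
          have h7 := (add_lt_add_iff_left (Ordinal.omega0 * α)).1 h6
          have h8 : k < n + 1 := by exact_mod_cast h7
          omega
        have h1 : s.2 ⟨_, hx⟩ = decide (k < m) := hval s hs t ht hsub α hα k hx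
        have h2 : (ψ v).2 ⟨_, hxv⟩ = decide (k < φ α v) := hψsucc v hvT α (by rw [hv1]; rfl) k hxv
        have h3 : ((ψ v).restrict _ hlam2).2 ⟨_, hx'⟩ = (ψ v).2 ⟨_, hxv⟩ := rfl
        rw [h1, h3, h2]
        have h4 : k < m := lt_of_le_of_lt hkn hnm
        simp [h4, lt_trans h4 hmv]
    have hyne : (ψ (t.restrict (α+1) hα)).restrict _ hlam1 ≠ (ψ v).restrict _ hlam2 := by
      intro hcon
      have hpos : Ordinal.omega0 * α + (m : Ordinal)
          < Ordinal.omega0 * α + ((m+1 : ℕ) : Ordinal) :=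
        (add_lt_add_iff_left _).2 (by exact_mod_cast Nat.lt_succ_self m)
      have hpy : Ordinal.omega0 * α + (m : Ordinal) < (ψ (t.restrict (α+1) hα)).1 :=
        lt_of_lt_of_le hpos hlam1
      have hpz : Ordinal.omega0 * α + (m : Ordinal) < (ψ v).1 := lt_of_lt_of_le hpos hlam2
      have h1 : ((ψ (t.restrict (α+1) hα)).restrict _ hlam1).2 ⟨_, hpos⟩
          = decide (m < φ α (t.restrict (α+1) hα)) := hψsucc _ hu₁T α rfl m hpy
      have h2 : ((ψ v).restrict _ hlam2).2 ⟨_, hpos⟩ = decide (m < φ α v) :=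
        hψsucc v hvT α (by rw [hv1]; rfl) m hpz
      have h3 := BinSeq.val_eq hcon (Ordinal.omega0 * α + (m : Ordinal)) hpos hpos
      rw [h1, h2, decide_eq_decide] at h3
      have h4 := h3.2 hmv
      rw [← hm] at h4
      exact lt_irrefl m h4
    have hdq : s.1 / Ordinal.omega0 = α := by
      rw [hs1]; exact st15_div_eq (Ordinal.nat_lt_omega0 (n+1))
    refine ⟨_, hyS, _, hzS, hsy, hsz, rfl, ?_, hyne⟩
    rw [hdq]
    show Ordinal.omega0 * α + ((m+1 : ℕ) : Ordinal) < Ordinal.omega0 * (α + 1)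
    rw [Ordinal.add_one_eq_succ, Ordinal.mul_succ]
    exact (add_lt_add_iff_left _).2 (Ordinal.nat_lt_omega0 (m+1))
  have main : ∀ β, ∀ s ∈ S, s.1 = β → π s = s := by
    intro β
    induction β using Ordinal.induction with
    | h β IH =>
    intro s hs hs1
    have hπsS : π s ∈ S := hbij.mapsTo hs
    have hπs1 : (π s).1 = β := by rw [hlev1 s hs, hs1]
    have hrest : ∀ γ, γ < β → ∀ (hγ' : γ ≤ (π s).1) (hγ'' : γ ≤ s.1),
        (π s).restrict γ hγ' = s.restrict γ hγ'' := by
      intro γ hγ hγ' hγ''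
      have h1 : s.restrict γ hγ'' ∈ S := hSdc s hs γ hγ''
      have h2 : π (s.restrict γ hγ'') = s.restrict γ hγ'' := IH γ hγ _ h1 rfl
      have h3 : BinSeq.ssub (s.restrict γ hγ'') s :=
        BinSeq.restrict_ssub s γ hγ'' (hs1 ▸ hγ)
      have h4 := hπmono _ h1 s hs h3
      rw [h2] at h4
      obtain ⟨hlt, he⟩ := h4
      exact he
    have hvalag : ∀ x (hx : x < (π s).1) (hx' : x < s.1), x + 1 < β →
        (π s).2 ⟨x, hx⟩ = s.2 ⟨x, hx'⟩ := by
      intro x hx hx' hx1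
      have hle1 : x + 1 ≤ (π s).1 := by rw [hπs1]; exact hx1.le
      have hle2 : x + 1 ≤ s.1 := by rw [hs1]; exact hx1.le
      have h := hrest (x+1) hx1 hle1 hle2
      have hxx : x < x + 1 := st15_lt_add_one x
      calc (π s).2 ⟨x, hx⟩ = ((π s).restrict (x+1) hle1).2 ⟨x, hxx⟩ :=
            (BinSeq.sub_apply (BinSeq.restrict_sub _ _ _) x hxx hx).symm
        _ = (s.restrict (x+1) hle2).2 ⟨x, hxx⟩ := BinSeq.val_eq h x hxx hxx
        _ = s.2 ⟨x, hx'⟩ := BinSeq.sub_apply (BinSeq.restrict_sub _ _ _) x hxx hx'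
    rcases Ordinal.zero_or_succ_or_isSuccLimit β with h0 | ⟨δ, hδ⟩ | hlim
    · apply BinSeq.ext2 (hlev1 s hs)
      intro x hx _
      exfalso
      rw [hπs1, h0] at hx
      exact lt_irrefl 0 (lt_of_le_of_lt zero_le hx)
    · rw [← Ordinal.add_one_eq_succ] at hδ
      subst hδ
      obtain ⟨n, hn⟩ := Ordinal.lt_omega0.1 (Ordinal.mod_lt δ Ordinal.omega0_ne_zero)
      have hδeq : δ = Ordinal.omega0 * (δ / Ordinal.omega0) + (n : Ordinal) := by
        rw [← hn]; exact (Ordinal.div_add_mod δ Ordinal.omega0).symm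
      set α := δ / Ordinal.omega0 with hα
      have hδs : δ < s.1 := by rw [hs1]; exact st15_lt_add_one δ
      have hδπ : δ < (π s).1 := by rw [hπs1]; exact st15_lt_add_one δ
      have hppos : Ordinal.omega0 * α + (n : Ordinal) < s.1 := by
        rw [← hδeq]; exact hδs
      have hppos' : Ordinal.omega0 * α + (n : Ordinal) < (π s).1 := by
        rw [← hδeq]; exact hδπ
      obtain ⟨t, ht, hsub⟩ := (hSm s).1 hs
      obtain ⟨t', ht', hsub'⟩ := (hSm (π s)).1 hπsS
      have hαt : α + 1 ≤ t.1 := hαle t ht α _ le_self_add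
        (lt_of_lt_of_le hppos hsub.fst)
      have hαt' : α + 1 ≤ t'.1 := hαle t' ht' α _ le_self_add
        (lt_of_lt_of_le hppos' hsub'.fst)
      have hs1' : s.1 = Ordinal.omega0 * α + ((n+1 : ℕ) : Ordinal) := by
        rw [hs1, hδeq, add_assoc, Nat.cast_succ]
      have hπs1' : (π s).1 = Ordinal.omega0 * α + ((n+1 : ℕ) : Ordinal) := by
        rw [hπs1, hδeq, add_assoc, Nat.cast_succ]
      have hbit : s.2 ⟨_, hppos⟩ = decide (n < φ α (t.restrict (α+1) hαt)) :=
        hval s hs t ht hsub α hαt n hppos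
      have hbit' : (π s).2 ⟨_, hppos'⟩ = decide (n < φ α (t'.restrict (α+1) hαt')) :=
        hval (π s) hπsS t' ht' hsub' α hαt' n hppos'
      by_cases hbits : (π s).2 ⟨_, hppos'⟩ = s.2 ⟨_, hppos⟩
      · apply BinSeq.ext2 (hlev1 s hs)
        intro x hx hx'
        have hxδ : x ≤ δ := by
          have h6 : x < δ + 1 := by rw [← hs1]; exact hx'
          rwa [Ordinal.add_one_eq_succ, Order.lt_succ_iff] at h6
        rcases lt_or_eq_of_le hxδ with hlt | rfl
        · apply hvalag x hx hx'
          rw [Ordinal.add_one_eq_succ, Ordinal.add_one_eq_succ]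
          exact Order.succ_lt_succ_iff.2 hlt
        · calc (π s).2 ⟨x, hx⟩ = (π s).2 ⟨_, hppos'⟩ :=
              congrArg (π s).2 (Subtype.ext hδeq)
            _ = s.2 ⟨_, hppos⟩ := hbits
            _ = s.2 ⟨x, hx'⟩ := congrArg s.2 (Subtype.ext hδeq.symm)
      · exfalso
        rw [hbit, hbit'] at hbits
        rcases Nat.lt_or_ge n (φ α (t.restrict (α+1) hαt)) with hcase | hcase
        · have h2 : ¬ n < φ α (t'.restrict (α+1) hαt') := by
            intro h
            apply hbits
            rw [decide_eq_decide]
            exact iff_of_true h hcase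
          exact hQoff (π s) hπsS t' ht' hsub' α hαt' n hπs1' h2
            ((hQinv s hs).1 (hQspine s hs t ht hsub α hαt n hs1' hcase))
        · have h2 : n < φ α (t'.restrict (α+1) hαt') := by
            by_contra h
            apply hbits
            rw [decide_eq_decide]
            exact iff_of_false h (Nat.not_lt.2 hcase)
          exact hQoff s hs t ht hsub α hαt n hs1' (Nat.not_lt.2 hcase)
            ((hQinv s hs).2 (hQspine (π s) hπsS t' ht' hsub' α hαt' n hπs1' h2))
    · apply BinSeq.ext2 (hlev1 s hs)
      intro x hx hx'
      apply hvalag x hx hx'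
      rw [Ordinal.add_one_eq_succ]
      exact hlim.succ_lt (by rw [← hπs1]; exact hx)
  intro s hs
  exact main s.1 s hs rfl
end
end

section
/- Suppose T and S are normal binary ℵ₁-trees such that the tree product T ⊗ S is a Souslin tree. Then T ∩ S is countable. -/
noncomputable section

open Cardinal Set

/-- A normal binary ℵ₁-tree: every node admits extensions at every level below `ω₁`. -/
def IsNormalBinaryAleph1Tree (T : Set BinSeq) : Prop :=
  IsBinaryAleph1Tree T ∧
  ∀ t ∈ T, ∀ α, t.1 ≤ α → α < omega1 → ∃ t' ∈ T, t'.1 = α ∧ t.sub t'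

/-- The strict ordering of the tree product: coordinatewise proper extension. -/
def ProdLt (p q : BinSeq × BinSeq) : Prop := p.1.ssub q.1 ∧ p.2.ssub q.2

/-- The tree product `T ⊗ S`: pairs `(x, y) ∈ T × S` with `dom x = dom y`. -/
def TreeProd (T S : Set BinSeq) : Set (BinSeq × BinSeq) :=
  {p | p.1 ∈ T ∧ p.2 ∈ S ∧ p.1.1 = p.2.1}

/-- `T ⊗ S` is a Souslin tree: it has height `ω₁`, countable levels, no uncountable chain
and no uncountable antichain. -/
def ProdIsSouslin (T S : Set BinSeq) : Prop :=
  (∀ α < omega1, ∃ p ∈ TreeProd T S, p.1.1 = α) ∧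
  (∀ α < omega1, {p | p ∈ TreeProd T S ∧ p.1.1 = α}.Countable) ∧
  (∀ C ⊆ TreeProd T S, IsChain ProdLt C → C.Countable) ∧
  (∀ A ⊆ TreeProd T S,
    (∀ p ∈ A, ∀ q ∈ A, p ≠ q → ¬ ProdLt p q ∧ ¬ ProdLt q p) → A.Countable)

namespace Statement16Aux

open BinSeq

theorem restrict_restrict (t : BinSeq) {β γ : Ordinal} (h : β ≤ t.1) (h' : γ ≤ β) :
    (t.restrict β h).restrict γ h' = t.restrict γ (h'.trans h) := rfl

theorem restrict_self (t : BinSeq) : t.restrict t.1 le_rfl = t := rfl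

theorem restrict_sub (t : BinSeq) {β} (h : β ≤ t.1) : (t.restrict β h).sub t := ⟨h, rfl⟩

theorem restrict_eq_of_eq {t t' : BinSeq} (h : t = t') {β} (hβ : β ≤ t.1) (hβ' : β ≤ t'.1) :
    t.restrict β hβ = t'.restrict β hβ' := by subst h; rfl

theorem sub_trans {s t u : BinSeq} (h1 : s.sub t) (h2 : t.sub u) : s.sub u := by
  obtain ⟨hl1, he1⟩ := h1
  obtain ⟨hl2, he2⟩ := h2
  refine ⟨hl1.trans hl2, ?_⟩
  calc u.restrict s.1 (hl1.trans hl2) = (u.restrict t.1 hl2).restrict s.1 hl1 := rfl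
    _ = t.restrict s.1 hl1 := restrict_eq_of_eq he2 _ _
    _ = s := he1

theorem sub_restrict {x z : BinSeq} (h : x.sub z) {β} (hβ1 : x.1 ≤ β) (hβ2 : β ≤ z.1) :
    x.sub (z.restrict β hβ2) := by
  obtain ⟨hl, he⟩ := h
  exact ⟨hβ1, he⟩

theorem eq_of_sub_dom {s t : BinSeq} (h : s.sub t) (hd : s.1 = t.1) : s = t := by
  obtain ⟨hl, he⟩ := h
  obtain ⟨a, f⟩ := s
  simp only at hd
  subst hd
  exact he.symm

theorem eq_of_dom_zero {s t : BinSeq} (hs : s.1 = 0) (ht : t.1 = 0) : s = t := by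
  obtain ⟨a, f⟩ := s
  obtain ⟨b, g⟩ := t
  simp only at hs ht
  subst hs; subst ht
  congr 1
  funext p
  exact absurd p.2 (zero_le (a := p.1)).not_gt

theorem apply_congr {u v : BinSeq} (h : u = v) {β} (hu : β < u.1) (hv : β < v.1) :
    u.2 ⟨β, hu⟩ = v.2 ⟨β, hv⟩ := by subst h; rfl

end Statement16Aux
namespace Statement16Aux

open BinSeq

theorem countable_Iio {γ : Ordinal.{0}} (h : γ < omega1) : (Set.Iio γ).Countable := by
  rw [← Cardinal.le_aleph0_iff_set_countable, Ordinal.mk_Iio_ordinal]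
  have h1 : γ.card < Cardinal.aleph 1 := Cardinal.lt_ord.mp h
  have h2 : γ.card ≤ Cardinal.aleph0 := by
    rw [← Cardinal.succ_aleph0] at h1
    exact Order.lt_succ_iff.mp h1
  exact (Cardinal.lift_le.mpr h2).trans_eq Cardinal.lift_aleph0

theorem not_ctble : ¬ (Set.Iio (omega1 : Ordinal.{0})).Countable := by
  intro hc
  have h1 := hc.le_aleph0
  rw [Ordinal.mk_Iio_ordinal] at h1
  have h2 : Ordinal.card omega1 = Cardinal.aleph 1 := Cardinal.card_ord _
  rw [h2, ← Cardinal.lift_aleph0.{1,0}, Cardinal.lift_le] at h1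
  exact absurd h1 (not_le.mpr Cardinal.aleph0_lt_aleph_one)

theorem below_ctble {T : Set BinSeq} (hT : IsBinaryAleph1Tree T) {γ : Ordinal} (hγ : γ < omega1) :
    {t | t ∈ T ∧ t.1 < γ}.Countable := by
  have hsub : {t | t ∈ T ∧ t.1 < γ} ⊆ ⋃ α ∈ Set.Iio γ, {t | t ∈ T ∧ t.1 = α} := by
    rintro t ⟨ht, hlt⟩
    exact Set.mem_biUnion hlt ⟨ht, rfl⟩
  exact Set.Countable.mono hsub
    ((countable_Iio hγ).biUnion fun α hα => hT.countable_levels α (lt_trans hα hγ))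

theorem exists_fiber_uncountable {s : Set BinSeq} (hs : ¬ s.Countable) {L : Set BinSeq}
    (hL : L.Countable) (g : BinSeq → BinSeq) (hg : ∀ y ∈ s, g y ∈ L) :
    ∃ z ∈ L, ¬ {y | y ∈ s ∧ g y = z}.Countable := by
  by_contra hcon
  push_neg at hcon
  apply hs
  have hsub : s ⊆ ⋃ z ∈ L, {y | y ∈ s ∧ g y = z} :=
    fun y hy => Set.mem_biUnion (hg y hy) ⟨hy, rfl⟩
  exact (hL.biUnion hcon).mono hsub

end Statement16Aux
namespace Statement16Aux

open BinSeq

/-- The pruned intersection tree: elements of `T ∩ S` with uncountably many extensions. -/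
def R' (T S : Set BinSeq) : Set BinSeq :=
  {x | x ∈ T ∩ S ∧ ¬ {y | y ∈ T ∩ S ∧ x.sub y}.Countable}

theorem R'_downward {T S : Set BinSeq} (hT : IsBinaryAleph1Tree T) (hS : IsBinaryAleph1Tree S)
    {z : BinSeq} (hz : z ∈ R' T S) {β : Ordinal} (hβ : β ≤ z.1) : z.restrict β hβ ∈ R' T S := by
  refine ⟨⟨hT.downward_closed z hz.1.1 β hβ, hS.downward_closed z hz.1.2 β hβ⟩, ?_⟩
  intro hc
  apply hz.2
  refine Set.Countable.mono ?_ hc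
  rintro y ⟨hy1, hy2⟩
  exact ⟨hy1, sub_trans (restrict_sub z hβ) hy2⟩

theorem extendR' {T S : Set BinSeq} (hT : IsBinaryAleph1Tree T) (hS : IsBinaryAleph1Tree S)
    {x : BinSeq} (hx : x ∈ R' T S) {γ : Ordinal} (h1 : x.1 ≤ γ) (h2 : γ < omega1) :
    ∃ z ∈ R' T S, z.1 = γ ∧ x.sub z := by
  obtain ⟨hxR, hxu⟩ := hx
  set s : Set BinSeq := {y | (y ∈ T ∩ S ∧ x.sub y) ∧ γ ≤ y.1} with hsdef
  have hsu : ¬ s.Countable := by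
    intro hc
    apply hxu
    have hsub : {y | y ∈ T ∩ S ∧ x.sub y} ⊆ s ∪ {t | t ∈ T ∧ t.1 < γ} := by
      intro y hy
      rcases le_or_gt γ y.1 with hle | hlt
      · exact Set.mem_union_left _ ⟨hy, hle⟩
      · exact Set.mem_union_right _ ⟨hy.1.1, hlt⟩
    exact (hc.union (below_ctble hT h2)).mono hsub
  set g : BinSeq → BinSeq := fun y => if h : γ ≤ y.1 then y.restrict γ h else y with hgdef
  have hg : ∀ y ∈ s, g y ∈ {t | t ∈ T ∩ S ∧ t.1 = γ} := by
    intro y hy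
    have h2' : γ ≤ y.1 := hy.2
    simp only [hgdef, dif_pos h2']
    exact ⟨⟨hT.downward_closed y hy.1.1.1 γ h2', hS.downward_closed y hy.1.1.2 γ h2'⟩, rfl⟩
  have hL : {t | t ∈ T ∩ S ∧ t.1 = γ}.Countable := by
    refine Set.Countable.mono ?_ (hT.countable_levels γ h2)
    rintro t ⟨ht, hd⟩
    exact ⟨ht.1, hd⟩
  obtain ⟨z, hzL, hzu⟩ := exists_fiber_uncountable hsu hL g hg
  have hfib : ¬ {y | y ∈ T ∩ S ∧ z.sub y}.Countable := by
    intro hc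
    apply hzu
    refine hc.mono ?_
    rintro y ⟨hy, he⟩
    refine ⟨hy.1.1, ?_⟩
    rw [← he]
    have h2' : γ ≤ y.1 := hy.2
    simp only [hgdef, dif_pos h2']
    exact restrict_sub y h2'
  have hne : {y | y ∈ s ∧ g y = z}.Nonempty := by
    by_contra hcon
    rw [Set.not_nonempty_iff_eq_empty] at hcon
    exact hzu (by rw [hcon]; exact Set.countable_empty)
  obtain ⟨y, hy, he⟩ := hne
  have h2' : γ ≤ y.1 := hy.2
  have hz' : z = y.restrict γ h2' := by rw [← he]; simp only [hgdef, dif_pos h2']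
  subst hz'
  refine ⟨y.restrict γ h2', ⟨hzL.1, hfib⟩, rfl, ?_⟩
  obtain ⟨hl, heq⟩ := hy.1.2
  exact ⟨h1, heq⟩

theorem chain_countable {T S : Set BinSeq} (h : ProdIsSouslin T S) {C : Set BinSeq}
    (hC : C ⊆ T ∩ S)
    (hchain : ∀ x ∈ C, ∀ y ∈ C, x ≠ y → x.ssub y ∨ y.ssub x) : C.Countable := by
  have hD : ((fun x : BinSeq => (x, x)) '' C).Countable := by
    refine h.2.2.1 _ ?_ ?_
    · rintro p ⟨x, hx, rfl⟩
      exact ⟨(hC hx).1, (hC hx).2, rfl⟩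
    · rintro p ⟨x, hx, rfl⟩ q ⟨y, hy, rfl⟩ hne
      have hxy : x ≠ y := fun he => hne (by rw [he])
      rcases hchain x hx y hy hxy with hss | hss
      · exact Or.inl ⟨hss, hss⟩
      · exact Or.inr ⟨hss, hss⟩
  have hsub : C ⊆ Prod.fst '' ((fun x : BinSeq => (x, x)) '' C) := by
    intro x hx
    exact ⟨(x, x), ⟨x, hx, rfl⟩, rfl⟩
  exact Set.Countable.mono hsub (hD.image Prod.fst)

theorem exists_two {T S : Set BinSeq} (hT : IsBinaryAleph1Tree T) (hS : IsBinaryAleph1Tree S)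
    (h : ProdIsSouslin T S) {x : BinSeq} (hx : x ∈ R' T S) :
    ∃ u ∈ R' T S, ∃ v ∈ R' T S, x.sub u ∧ x.sub v ∧ u.1 = v.1 ∧ u ≠ v := by
  by_contra hcon
  push_neg at hcon
  set C : Set BinSeq := {y | y ∈ R' T S ∧ x.sub y} with hCdef
  have hchain : ∀ y ∈ C, ∀ z ∈ C, y ≠ z → y.ssub z ∨ z.ssub y := by
    intro y hy z hz hne
    rcases lt_trichotomy y.1 z.1 with hlt | heq | hlt
    · left
      have hw : z.restrict y.1 hlt.le ∈ R' T S := R'_downward hT hS hz.1 hlt.le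
      have hxle : x.1 ≤ y.1 := hy.2.1
      have hxw : x.sub (z.restrict y.1 hlt.le) := sub_restrict hz.2 hxle hlt.le
      have := hcon _ hw _ hy.1 hxw hy.2 rfl
      exact ⟨hlt, this⟩
    · exact absurd (hcon _ hy.1 _ hz.1 hy.2 hz.2 heq) hne
    · right
      have hw : y.restrict z.1 hlt.le ∈ R' T S := R'_downward hT hS hy.1 hlt.le
      have hxle : x.1 ≤ z.1 := hz.2.1
      have hxw : x.sub (y.restrict z.1 hlt.le) := sub_restrict hy.2 hxle hlt.le
      have := hcon _ hw _ hz.1 hxw hz.2 rfl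
      exact ⟨hlt, this⟩
  have hCc : C.Countable := chain_countable h (fun y hy => hy.1.1) hchain
  have hx1 : x.1 < omega1 := hT.dom_lt x hx.1.1
  apply not_ctble
  have hIco : (Set.Ico x.1 omega1).Countable := by
    refine Set.Countable.mono ?_ (hCc.image fun y : BinSeq => y.1)
    rintro γ ⟨hge, hlt⟩
    obtain ⟨z, hz, hzd, hzsub⟩ := extendR' hT hS hx hge hlt
    exact ⟨z, ⟨hz, hzsub⟩, hzd⟩
  have hsplit : Set.Iio (omega1 : Ordinal.{0}) ⊆ Set.Iio x.1 ∪ Set.Ico x.1 omega1 := by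
    intro γ hγ
    rcases lt_or_ge γ x.1 with hl | hl
    · exact Set.mem_union_left _ hl
    · exact Set.mem_union_right _ ⟨hl, hγ⟩
  exact Set.Countable.mono hsplit ((countable_Iio hx1).union hIco)

theorem exists_least_diff {u v : BinSeq} (hdom : u.1 = v.1) (hne : u ≠ v) {γ : Ordinal}
    (hγu : γ ≤ u.1) (hγv : γ ≤ v.1) (hres : u.restrict γ hγu = v.restrict γ hγv) :
    ∃ β : Ordinal, ∃ hu : β < u.1, ∃ hv : β < v.1, γ ≤ β ∧
      u.restrict β hu.le = v.restrict β hv.le ∧ u.2 ⟨β, hu⟩ ≠ v.2 ⟨β, hv⟩ := by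
  obtain ⟨a, f⟩ := u
  obtain ⟨b, g⟩ := v
  simp only at hdom hγu hγv ⊢
  subst hdom
  have hfg : f ≠ g := fun hE => hne (by rw [hE])
  have hres2 : ∀ p : Set.Iio γ,
      f ⟨p.1, lt_of_lt_of_le p.2 hγu⟩ = g ⟨p.1, lt_of_lt_of_le p.2 hγv⟩ := by
    intro p
    have h2 : (fun x : Set.Iio γ => f ⟨x.1, lt_of_lt_of_le x.2 hγu⟩)
        = (fun x : Set.Iio γ => g ⟨x.1, lt_of_lt_of_le x.2 hγv⟩) := by
      injection hres
    exact congrFun h2 p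
  have hex : ∃ β : Ordinal, ∃ hβ : β < a, f ⟨β, hβ⟩ ≠ g ⟨β, hβ⟩ := by
    by_contra hcc
    push_neg at hcc
    exact hfg (funext fun p => hcc p.1 p.2)
  set B : Set Ordinal := {β | ∃ hβ : β < a, f ⟨β, hβ⟩ ≠ g ⟨β, hβ⟩} with hBdef
  have hBne : B.Nonempty := hex
  set m : Ordinal := Ordinal.lt_wf.min B hBne with hmdef
  have hmem : m ∈ B := Ordinal.lt_wf.min_mem B hBne
  obtain ⟨hma, hdiff⟩ := hmem
  have hγm : γ ≤ m := by
    by_contra hc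
    push_neg at hc
    exact hdiff (hres2 ⟨m, hc⟩)
  refine ⟨m, hma, hma, hγm, ?_, hdiff⟩
  show (⟨m, fun x => f ⟨x.1, lt_of_lt_of_le x.2 hma.le⟩⟩ : BinSeq)
      = ⟨m, fun x => g ⟨x.1, lt_of_lt_of_le x.2 hma.le⟩⟩
  refine congrArg (Sigma.mk m) (funext fun p => ?_)
  by_contra hp
  exact absurd p.2 (Ordinal.lt_wf.not_lt_min B ⟨lt_trans p.2 hma, hp⟩)

/-- A "minimal splitting pair": two sequences of successor length `β + 1`
agreeing below `β` and differing at `β`. -/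
def SplitPair (u v : BinSeq) : Prop :=
  ∃ β : Ordinal, ∃ hu : β < u.1, ∃ hv : β < v.1, u.1 = β + 1 ∧ v.1 = β + 1 ∧
    u.restrict β hu.le = v.restrict β hv.le ∧ u.2 ⟨β, hu⟩ ≠ v.2 ⟨β, hv⟩

theorem restrict_congr_dom {t : BinSeq} {γ γ' : Ordinal} (h : γ = γ') (hγ : γ ≤ t.1)
    (hγ' : γ' ≤ t.1) : t.restrict γ hγ = t.restrict γ' hγ' := by subst h; rfl

theorem restrict_eq_restrict_of_le {t s : BinSeq} {γ : Ordinal} (hγt : γ ≤ t.1) (hγs : γ ≤ s.1)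
    (h : t.restrict γ hγt = s.restrict γ hγs) {δ : Ordinal} (hδ : δ ≤ γ) :
    t.restrict δ (hδ.trans hγt) = s.restrict δ (hδ.trans hγs) :=
  calc t.restrict δ (hδ.trans hγt) = (t.restrict γ hγt).restrict δ hδ := rfl
    _ = (s.restrict γ hγs).restrict δ hδ := restrict_eq_of_eq h hδ hδ
    _ = s.restrict δ (hδ.trans hγs) := rfl

theorem not_prodLt_of_split {p q : BinSeq × BinSeq} (hp : SplitPair p.1 p.2)
    (hq : SplitPair q.1 q.2) : ¬ ProdLt p q := by
  rintro ⟨⟨h1, e1⟩, ⟨h2, e2⟩⟩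
  obtain ⟨β, hu, hv, hdu, hdv, heq, hne⟩ := hp
  obtain ⟨β', hu', hv', hdu', hdv', heq', hne'⟩ := hq
  have hlt : β < β' := by
    have hss : β + 1 < β' + 1 := by rw [← hdu, ← hdu']; exact h1
    rw [Ordinal.add_one_eq_succ, Ordinal.add_one_eq_succ, Order.succ_lt_succ_iff] at hss
    exact hss
  have hββ' : β + 1 ≤ β' := by
    rw [Ordinal.add_one_eq_succ]; exact Order.succ_le_of_lt hlt
  have hle1 : β + 1 ≤ q.1.1 := hdu ▸ h1.le
  have hle2 : β + 1 ≤ q.2.1 := hdv ▸ h2.le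
  have e1' : q.1.restrict (β + 1) hle1 = p.1 :=
    (restrict_congr_dom hdu.symm hle1 h1.le).trans e1
  have e2' : q.2.restrict (β + 1) hle2 = p.2 :=
    (restrict_congr_dom hdv.symm hle2 h2.le).trans e2
  have hkey : p.1 = p.2 := by
    rw [← e1', ← e2']
    exact restrict_eq_restrict_of_le hu'.le hv'.le heq' hββ'
  exact hne (apply_congr hkey hu hv)
end Statement16Aux

open Statement16Aux in
/-- If `T` and `S` are normal binary ℵ₁-trees whose tree product `T ⊗ S`
is a Souslin tree, then `T ∩ S` is countable. -/
theorem statement16 (T S : Set BinSeq)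
    (hT : IsNormalBinaryAleph1Tree T) (hS : IsNormalBinaryAleph1Tree S)
    (h : ProdIsSouslin T S) :
    (T ∩ S).Countable := by
  by_contra hR
  have hTS_ne : (T ∩ S).Nonempty := by
    rcases Set.eq_empty_or_nonempty (T ∩ S) with hE | hNE
    · exact absurd (hE ▸ Set.countable_empty) hR
    · exact hNE
  obtain ⟨y0, hy0⟩ := hTS_ne
  set e : BinSeq := y0.restrict 0 (zero_le (a := _)) with hedef
  have hesub : ∀ z : BinSeq, e.sub z := fun z =>
    ⟨zero_le (a := _), eq_of_dom_zero rfl rfl⟩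
  have hroot : e ∈ R' T S := by
    refine ⟨⟨hT.1.downward_closed y0 hy0.1 0 (zero_le (a := _)),
      hS.1.downward_closed y0 hy0.2 0 (zero_le (a := _))⟩, ?_⟩
    intro hc
    apply hR
    refine Set.Countable.mono ?_ hc
    intro z hz
    exact ⟨hz, hesub z⟩
  set A : Set (BinSeq × BinSeq) :=
    {p | p ∈ TreeProd T S ∧ SplitPair p.1 p.2} with hAdef
  have hAc : A.Countable :=
    h.2.2.2 A (fun p hp => hp.1)
      (fun p hp q hq _ => ⟨not_prodLt_of_split hp.2 hq.2, not_prodLt_of_split hq.2 hp.2⟩)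
  apply not_ctble
  have hunb : ∀ γ, γ < omega1 → ∃ p ∈ A, γ < p.1.1 := by
    intro γ hγ
    obtain ⟨x, hx, hxd, -⟩ := extendR' hT.1 hS.1 hroot (zero_le (a := γ)) hγ
    obtain ⟨u, hu, v, hv, hxu, hxv, hduv, hne⟩ := exists_two hT.1 hS.1 h hx
    obtain ⟨hlu, heu⟩ := hxu
    obtain ⟨hlv, hev⟩ := hxv
    have hres : u.restrict x.1 hlu = v.restrict x.1 hlv := heu.trans hev.symm
    obtain ⟨β, hβu, hβv, hγβ, heqβ, hneβ⟩ := exists_least_diff hduv hne hlu hlv hres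
    have hsu : β + 1 ≤ u.1 := by rw [Ordinal.add_one_eq_succ]; exact Order.succ_le_of_lt hβu
    have hsv : β + 1 ≤ v.1 := by rw [Ordinal.add_one_eq_succ]; exact Order.succ_le_of_lt hβv
    have hβs : β < β + 1 := by rw [Ordinal.add_one_eq_succ]; exact Order.lt_succ β
    refine ⟨(u.restrict (β+1) hsu, v.restrict (β+1) hsv), ⟨⟨?_, ?_, rfl⟩, ?_⟩, ?_⟩
    · exact hT.1.downward_closed u hu.1.1 _ hsu
    · exact hS.1.downward_closed v hv.1.2 _ hsv
    · exact ⟨β, hβs, hβs, rfl, rfl, heqβ, hneβ⟩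
    · exact lt_of_le_of_lt (hxd.symm.trans_le hγβ) hβs
  have hsub : Set.Iio (omega1 : Ordinal.{0}) ⊆ ⋃ p ∈ A, Set.Iio p.1.1 := by
    intro γ hγ
    obtain ⟨p, hp, hlt⟩ := hunb γ hγ
    exact Set.mem_biUnion hp hlt
  refine Set.Countable.mono hsub (hAc.biUnion ?_)
  intro p hp
  exact countable_Iio (hT.1.dom_lt p.1 hp.1.1)
end
end
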